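/- arXiv:1604.05960 — 5 statements merged into one kernel-verified Lean document; each statement's English description precedes it below -/
import Mathlib

section
/- Let φ be a Bernstein function extended to the right half-plane. Then for every z with Re(z) > 0, |arg φ(z)| ≤ |arg z|. -/
open MeasureTheory Filter Set

/-- A Bernstein function, given by its representing triplet `(κ, δ, μ)`:
`φ(u) = κ + δ·u + ∫₀^∞ (1 - e^{-u y}) μ(dy)`, with `κ, δ ≥ 0`,
`μ` a nonnegative measure on `(0,∞)` with `∫ min(1,y) μ(dy) < ∞`, and `φ ≢ 0`. -/
structure BernsteinFn where
  κ : ℝ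
  δ : ℝ
  μ : Measure ℝ
  hκ : 0 ≤ κ
  hδ : 0 ≤ δ
  hsupp : μ (Set.Iic 0) = 0
  hint : Integrable (fun y : ℝ => min 1 y) μ
  nontriv : ¬ (κ = 0 ∧ δ = 0 ∧ μ = 0)

/-- The Bernstein function as a real function on `(0,∞)`. -/
noncomputable def BernsteinFn.toFun (φ : BernsteinFn) (u : ℝ) : ℝ :=
  φ.κ + φ.δ * u + ∫ y, (1 - Real.exp (-(u * y))) ∂φ.μ

/-- The holomorphic extension of the Bernstein function to the right half-plane. -/
noncomputable def BernsteinFn.toFunC (φ : BernsteinFn) (z : ℂ) : ℂ :=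
  (φ.κ : ℂ) + (φ.δ : ℂ) * z + ∫ y, (1 - Complex.exp (-(z * (y : ℂ)))) ∂φ.μ

/-- The derivative of the Bernstein function: `φ'(u) = δ + ∫₀^∞ y e^{-u y} μ(dy)`. -/
noncomputable def BernsteinFn.deriv1 (φ : BernsteinFn) (u : ℝ) : ℝ :=
  φ.δ + ∫ y, y * Real.exp (-(u * y)) ∂φ.μ

private lemma bf_key (s c E S C : ℝ) (hs : 0 ≤ s) (hc : 0 ≤ c) (hE : 0 < E)
    (hE1 : E * (1 + s) ≤ 1) (hS : 0 ≤ S) (hSc : S ≤ c) (hC : C ≤ 1) :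
    E * S * s + E * c * C ≤ c := by
  nlinarith [mul_nonneg hc (sub_nonneg.2 hE1),
    mul_nonneg (mul_nonneg hE.le hs) (sub_nonneg.2 hSc),
    mul_nonneg (mul_nonneg hE.le hc) (sub_nonneg.2 hC)]

private lemma bf_ptwise (z : ℂ) (hz : 0 < z.re) {y : ℝ} (hy : 0 < y) :
    |(1 - Complex.exp (-(z * y))).im| * z.re ≤ |z.im| * (1 - Complex.exp (-(z * y))).re := by
  have hre : (-(z * (y:ℂ))).re = -(z.re * y) := by simp
  have him : (-(z * (y:ℂ))).im = -(z.im * y) := by simp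
  have h1 : (1 - Complex.exp (-(z * y))).im
      = -(Real.exp (-(z.re * y)) * Real.sin (-(z.im * y))) := by
    rw [Complex.sub_im, Complex.one_im, Complex.exp_im, hre, him]; ring
  have h2 : (1 - Complex.exp (-(z * y))).re
      = 1 - Real.exp (-(z.re * y)) * Real.cos (z.im * y) := by
    rw [Complex.sub_re, Complex.one_re, Complex.exp_re, hre, him, Real.cos_neg]
  rw [h1, h2]
  set a := z.re; set b := z.im
  set E := Real.exp (-(a * y)) with hE
  have hEpos : 0 < E := Real.exp_pos _
  have hsin : |(-(E * Real.sin (-(b * y))))| = E * |Real.sin (|b| * y)| := by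
    rcases abs_cases b with ⟨h, _⟩ | ⟨h, _⟩ <;> rw [h] <;>
      simp [abs_mul, abs_of_pos hEpos, neg_mul, Real.sin_neg, abs_neg]
  have hcos : Real.cos (b * y) = Real.cos (|b| * y) := by
    rcases abs_cases b with ⟨h, _⟩ | ⟨h, _⟩ <;> rw [h] <;> simp [neg_mul, Real.cos_neg]
  rw [hsin, hcos]
  have hE1 : E * (1 + a * y) ≤ 1 := by
    have h := Real.add_one_le_exp (a * y)
    have : E * (1 + a * y) ≤ E * Real.exp (a * y) := by
      apply mul_le_mul_of_nonneg_left (by linarith) hEpos.le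
    rwa [hE, ← Real.exp_add, neg_add_cancel, Real.exp_zero] at this
  have hSc : |Real.sin (|b| * y)| ≤ |b| * y := by
    have := Real.abs_sin_le_abs (x := |b| * y)
    rwa [abs_of_nonneg (mul_nonneg (abs_nonneg b) hy.le)] at this
  have hkey := bf_key (a * y) (|b| * y) E (|Real.sin (|b| * y)|) (Real.cos (|b| * y))
    (mul_nonneg hz.le hy.le) (mul_nonneg (abs_nonneg b) hy.le) hEpos hE1
    (abs_nonneg _) hSc (Real.cos_le_one _)
  nlinarith [hkey, hy]

private lemma bf_integrable (z : ℂ) (hz : 0 ≤ z.re) (μ : Measure ℝ)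
    (hμ : μ (Set.Iic 0) = 0) (hint : Integrable (fun y : ℝ => min 1 y) μ) :
    Integrable (fun y : ℝ => 1 - Complex.exp (-(z * y))) μ := by
  have hpos : ∀ᵐ y ∂μ, 0 < y := by
    rw [ae_iff]
    refine measure_mono_null (fun y hy => ?_) hμ
    simp only [not_lt] at hy; exact hy
  refine Integrable.mono' (hint.const_mul (2 * max 1 (‖z‖))) ?_ ?_
  · exact (Continuous.aestronglyMeasurable (by continuity))
  · filter_upwards [hpos] with y hy
    have hb2 : ‖1 - Complex.exp (-(z * y))‖ ≤ 2 := by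
      have h1 : ‖Complex.exp (-(z * y))‖ ≤ 1 := by
        rw [Complex.norm_exp]
        apply Real.exp_le_one_iff.2
        simp only [Complex.neg_re, Complex.mul_re, Complex.ofReal_re, Complex.ofReal_im,
          mul_zero, sub_zero]
        nlinarith [hz, hy.le]
      calc ‖1 - Complex.exp (-(z * y))‖ ≤ ‖(1:ℂ)‖ + ‖Complex.exp (-(z * y))‖ := norm_sub_le _ _
        _ ≤ 2 := by rw [norm_one]; linarith
    have habsz : ‖z * y‖ = ‖z‖ * y := by
      rw [norm_mul, Complex.norm_real, Real.norm_eq_abs, abs_of_pos hy]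
    rcases le_or_gt y 1 with h1 | h1
    · rw [min_eq_right h1]
      rcases le_or_gt (‖z‖ * y) 1 with h2 | h2
      · have := Complex.norm_exp_sub_one_le (x := -(z * y)) (by rwa [norm_neg, habsz])
        rw [norm_neg, habsz] at this
        calc ‖1 - Complex.exp (-(z * y))‖ = ‖Complex.exp (-(z * y)) - 1‖ := by
              rw [norm_sub_rev]
          _ ≤ 2 * (‖z‖ * y) := this
          _ ≤ 2 * max 1 (‖z‖) * y := by
              have : ‖z‖ ≤ max 1 (‖z‖) := le_max_right _ _
              nlinarith [hy.le]
      · calc ‖1 - Complex.exp (-(z * y))‖ ≤ 2 := hb2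
          _ ≤ 2 * max 1 (‖z‖) * y := by
              have : ‖z‖ ≤ max 1 (‖z‖) := le_max_right _ _
              nlinarith
    · rw [min_eq_left h1.le]
      calc ‖1 - Complex.exp (-(z * y))‖ ≤ 2 := hb2
        _ ≤ 2 * max 1 (‖z‖) * 1 := by nlinarith [le_max_left 1 (‖z‖)]

private lemma bf_arcsin_abs (x : ℝ) : |Real.arcsin x| = Real.arcsin |x| := by
  rcases le_or_gt 0 x with h | h
  · rw [abs_of_nonneg h, abs_of_nonneg (Real.arcsin_nonneg.2 h)]
  · rw [abs_of_neg h, abs_of_neg (Real.arcsin_lt_zero.2 h), ← Real.arcsin_neg]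

private lemma bf_arg_le (z W : ℂ) (hz : 0 < z.re) (hre : 0 ≤ W.re)
    (hkey : |W.im| * z.re ≤ |z.im| * W.re) : |W.arg| ≤ |z.arg| := by
  rcases eq_or_ne W 0 with rfl | hW0
  · simp [Complex.arg_zero, abs_nonneg]
  · have hWa : 0 < ‖W‖ := norm_pos_iff.mpr hW0
    have hza : 0 < ‖z‖ := norm_pos_iff.mpr (by rintro rfl; simp at hz)
    rw [Complex.arg_of_re_nonneg hre, Complex.arg_of_re_nonneg hz.le,
      bf_arcsin_abs, bf_arcsin_abs, abs_div, abs_div,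
      abs_of_pos hWa, abs_of_pos hza]
    apply Real.monotone_arcsin
    rw [div_le_div_iff₀ hWa hza]
    have hz2 : ‖z‖ ^ 2 = z.re ^ 2 + z.im ^ 2 := by
      rw [Complex.sq_norm, Complex.normSq_apply]; ring
    have hW2 : ‖W‖ ^ 2 = W.re ^ 2 + W.im ^ 2 := by
      rw [Complex.sq_norm, Complex.normSq_apply]; ring
    have hsq := mul_self_le_mul_self (mul_nonneg (abs_nonneg W.im) hz.le) hkey
    have h3 : (|W.im| * ‖z‖) ^ 2 ≤ (|z.im| * ‖W‖) ^ 2 := by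
      nlinarith [hsq, sq_abs W.im, sq_abs z.im, hz2, hW2, sq_nonneg (W.im * z.im)]
    exact (pow_le_pow_iff_left₀ (mul_nonneg (abs_nonneg _) hza.le)
      (mul_nonneg (abs_nonneg _) hWa.le) two_ne_zero).1 h3

/-- For every `z` with `Re z > 0`, `|arg φ(z)| ≤ |arg z|`. -/
theorem stmt4 (φ : BernsteinFn) (z : ℂ) (hz : 0 < z.re) :
    |Complex.arg (φ.toFunC z)| ≤ |Complex.arg z| := by
  set f : ℝ → ℂ := fun y => 1 - Complex.exp (-(z * y)) with hf
  have hpos : ∀ᵐ y ∂φ.μ, 0 < y := by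
    rw [ae_iff]
    refine measure_mono_null (fun y hy => ?_) φ.hsupp
    simp only [not_lt] at hy; exact hy
  have hint : Integrable f φ.μ := bf_integrable z hz.le φ.μ φ.hsupp φ.hint
  have hre : (∫ y, f y ∂φ.μ).re = ∫ y, (f y).re ∂φ.μ :=
    (Complex.reCLM.integral_comp_comm hint).symm
  have him : (∫ y, f y ∂φ.μ).im = ∫ y, (f y).im ∂φ.μ :=
    (Complex.imCLM.integral_comp_comm hint).symm
  have hWre : (φ.toFunC z).re = φ.κ + φ.δ * z.re + ∫ y, (f y).re ∂φ.μ := by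
    simp only [BernsteinFn.toFunC, ← hf, Complex.add_re, Complex.ofReal_re, Complex.mul_re,
      Complex.ofReal_im, zero_mul, sub_zero, hre]
  have hWim : (φ.toFunC z).im = φ.δ * z.im + ∫ y, (f y).im ∂φ.μ := by
    simp only [BernsteinFn.toFunC, ← hf, Complex.add_im, Complex.ofReal_im, Complex.mul_im,
      Complex.ofReal_re, zero_mul, add_zero, zero_add, him]
  have hfre : ∀ y : ℝ, 0 < y → 0 ≤ (f y).re := by
    intro y hy
    have hre' : (-(z * (y:ℝ) : ℂ)).re = -(z.re * y) := by simp
    have him' : (-(z * (y:ℝ) : ℂ)).im = -(z.im * y) := by simp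
    have h2 : (f y).re = 1 - Real.exp (-(z.re * y)) * Real.cos (z.im * y) := by
      rw [hf]
      rw [Complex.sub_re, Complex.one_re, Complex.exp_re, hre', him', Real.cos_neg]
    rw [h2]
    have hE : Real.exp (-(z.re * y)) ≤ 1 :=
      Real.exp_le_one_iff.2 (by nlinarith [hz.le, hy.le])
    nlinarith [Real.cos_le_one (z.im * y), Real.exp_pos (-(z.re * y)),
      Real.neg_one_le_cos (z.im * y)]
  have hIre : 0 ≤ ∫ y, (f y).re ∂φ.μ :=
    integral_nonneg_of_ae (by filter_upwards [hpos] with y hy; exact hfre y hy)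
  have hImRe : z.re * ∫ y, |(f y).im| ∂φ.μ ≤ |z.im| * ∫ y, (f y).re ∂φ.μ := by
    rw [← integral_const_mul, ← integral_const_mul]
    refine integral_mono_ae ((hint.im.abs).const_mul _) ((hint.re).const_mul _) ?_
    filter_upwards [hpos] with y hy
    have h := bf_ptwise z hz hy
    simp only [hf]
    linarith
  have hImI : |∫ y, (f y).im ∂φ.μ| ≤ ∫ y, |(f y).im| ∂φ.μ := by
    have := norm_integral_le_integral_norm (μ := φ.μ) fun y => (f y).im
    simpa using this
  have hkey : |(φ.toFunC z).im| * z.re ≤ |z.im| * (φ.toFunC z).re := by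
    rw [hWre, hWim]
    have h5 : |φ.δ * z.im + ∫ y, (f y).im ∂φ.μ| ≤ φ.δ * |z.im| + ∫ y, |(f y).im| ∂φ.μ := by
      refine (abs_add_le _ _).trans ?_
      rw [abs_mul, abs_of_nonneg φ.hδ]
      exact add_le_add_right hImI _
    nlinarith [mul_le_mul_of_nonneg_right h5 hz.le, hImRe, hIre, φ.hκ, φ.hδ,
      abs_nonneg z.im, hz, mul_nonneg (abs_nonneg z.im) φ.hκ]
  have hWre0 : 0 ≤ (φ.toFunC z).re := by
    rw [hWre]
    have := mul_nonneg φ.hδ hz.le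
    linarith [hIre, φ.hκ]
  exact bf_arg_le z (φ.toFunC z) hz hWre0 hkey
end

section
/- Let φ be a Bernstein function extended to the right half-plane. Then for all complex z = a + ib with a > 0, |φ'(a+ib)/φ(a+ib)| ≤ √10 · φ'(a)/φ(a) ≤ √10 / a. -/
open MeasureTheory Filter Set

/-- The derivative of the holomorphic extension: `φ'(z) = δ + ∫₀^∞ y e^{-z y} μ(dy)`. -/
noncomputable def BernsteinFn.deriv1C (φ : BernsteinFn) (z : ℂ) : ℂ :=
  (φ.δ : ℂ) + ∫ y, (y : ℂ) * Complex.exp (-(z * (y : ℂ))) ∂φ.μ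

private lemma aux_t_exp (t : ℝ) : t * Real.exp (-t) ≤ 1 - Real.exp (-t) := by
  have h := Real.add_one_le_exp t
  have hs : 0 < Real.exp (-t) := Real.exp_pos _
  have he : Real.exp t * Real.exp (-t) = 1 := by rw [← Real.exp_add]; simp
  nlinarith

private lemma aux_one_sub_exp (t : ℝ) : 1 - Real.exp (-t) ≤ t := by
  have := Real.add_one_le_exp (-t); linarith

private lemma aux_ae_pos {μ : Measure ℝ} (h : μ (Set.Iic 0) = 0) : ∀ᵐ y ∂μ, 0 < y := by
  rw [ae_iff]
  convert h using 2
  ext y; simp [not_lt]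

private lemma aux_integrable {μ : Measure ℝ} (hint : Integrable (fun y : ℝ => min 1 y) μ)
    (hae : ∀ᵐ y ∂μ, 0 < y) {E : Type*} [NormedAddCommGroup E] {f : ℝ → E}
    (hf : AEStronglyMeasurable f μ) {C : ℝ}
    (hb : ∀ y : ℝ, 0 < y → ‖f y‖ ≤ C * min 1 y) : Integrable f μ :=
  Integrable.mono' (hint.const_mul C) hf (hae.mono fun y hy => hb y hy)


/-- For `z = a + ib` with `a > 0`, `|φ'(z)/φ(z)| ≤ √10 · φ'(a)/φ(a) ≤ √10/a`. -/
theorem stmt7 (φ : BernsteinFn) (z : ℂ) (hz : 0 < z.re) :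
    ‖φ.deriv1C z / φ.toFunC z‖
        ≤ Real.sqrt 10 * (φ.deriv1 z.re / φ.toFun z.re) ∧
      Real.sqrt 10 * (φ.deriv1 z.re / φ.toFun z.re) ≤ Real.sqrt 10 / z.re := by
  set a := z.re with ha
  have haep : ∀ᵐ y ∂φ.μ, 0 < y := aux_ae_pos φ.hsupp
  -- integrability of the four integrands
  have i1 : Integrable (fun y : ℝ => 1 - Real.exp (-(a * y))) φ.μ := by
    refine aux_integrable φ.hint haep (Continuous.aestronglyMeasurable (by fun_prop))
      (C := max 1 a) fun y hy => ?_
    have hexp : Real.exp (-(a * y)) ≤ 1 := Real.exp_le_one_iff.mpr (by nlinarith)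
    have h0 : 0 ≤ 1 - Real.exp (-(a * y)) := by linarith
    rw [Real.norm_eq_abs, abs_of_nonneg h0]
    rcases le_total y 1 with hy1 | hy1
    · rw [min_eq_right hy1]
      have h2 : a ≤ max 1 a := le_max_right _ _
      nlinarith [aux_one_sub_exp (a * y)]
    · rw [min_eq_left hy1]
      have h1 : (1:ℝ) ≤ max 1 a := le_max_left _ _
      have := Real.exp_pos (-(a * y))
      nlinarith
  have i2 : Integrable (fun y : ℝ => y * Real.exp (-(a * y))) φ.μ := by
    refine aux_integrable φ.hint haep (Continuous.aestronglyMeasurable (by fun_prop))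
      (C := max 1 a⁻¹) fun y hy => ?_
    have hexp : 0 < Real.exp (-(a * y)) := Real.exp_pos _
    have hexp1 : Real.exp (-(a * y)) ≤ 1 := Real.exp_le_one_iff.mpr (by nlinarith)
    rw [Real.norm_eq_abs, abs_of_nonneg (by positivity)]
    rcases le_total y 1 with hy1 | hy1
    · rw [min_eq_right hy1]
      have h1 : (1:ℝ) ≤ max 1 a⁻¹ := le_max_left _ _
      nlinarith
    · rw [min_eq_left hy1]
      have h1 : a⁻¹ ≤ max 1 a⁻¹ := le_max_right _ _
      have key : y * Real.exp (-(a * y)) ≤ a⁻¹ := by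
        rw [← one_div]
        refine (le_div_iff₀ hz).mpr ?_
        nlinarith [aux_t_exp (a * y)]
      linarith
  have i3 : Integrable (fun y : ℝ => 1 - Complex.exp (-(z * (y : ℂ)))) φ.μ := by
    refine aux_integrable φ.hint haep (Continuous.aestronglyMeasurable (by fun_prop))
      (C := 2 * max 1 ‖z‖) fun y hy => ?_
    have hZ : (0:ℝ) ≤ ‖z‖ := norm_nonneg z
    have habs : ‖z * (y:ℂ)‖ = ‖z‖ * y := by
      rw [norm_mul, Complex.norm_real, Real.norm_eq_abs, abs_of_pos hy]
    rcases le_or_gt ‖z * (y:ℂ)‖ 1 with hc | hc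
    · have hb := Complex.norm_exp_sub_one_le (x := -(z * (y:ℂ)))
        (by rwa [norm_neg])
      have heq : ‖1 - Complex.exp (-(z * (y:ℂ)))‖
          = ‖Complex.exp (-(z * (y:ℂ))) - 1‖ := by
        rw [norm_sub_rev]
      rw [heq]
      rw [norm_neg, habs] at hb
      rw [habs] at hc
      rcases le_total y 1 with hy1 | hy1
      · rw [min_eq_right hy1]
        have h2 : ‖z‖ ≤ max 1 ‖z‖ := le_max_right _ _
        nlinarith
      · rw [min_eq_left hy1]
        have h1 : (1:ℝ) ≤ max 1 ‖z‖ := le_max_left _ _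
        nlinarith
    · have hb : ‖1 - Complex.exp (-(z * (y:ℂ)))‖ ≤ 2 := by
        calc ‖1 - Complex.exp (-(z * (y:ℂ)))‖
            ≤ ‖(1:ℂ)‖ + ‖Complex.exp (-(z * (y:ℂ)))‖ := norm_sub_le _ _
          _ ≤ 1 + 1 := by
              gcongr
              · simp
              · rw [Complex.norm_exp]
                apply Real.exp_le_one_iff.mpr
                simp only [Complex.neg_re, Complex.mul_re, Complex.ofReal_re,
                  Complex.ofReal_im, mul_zero, sub_zero]
                nlinarith
          _ = 2 := by norm_num
      rw [habs] at hc
      rcases le_total y 1 with hy1 | hy1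
      · rw [min_eq_right hy1]
        have h2 : ‖z‖ ≤ max 1 ‖z‖ := le_max_right _ _
        nlinarith
      · rw [min_eq_left hy1]
        have h1 : (1:ℝ) ≤ max 1 ‖z‖ := le_max_left _ _
        nlinarith
  have hnorm4 : ∀ y : ℝ, 0 < y →
      ‖(y:ℂ) * Complex.exp (-(z * (y:ℂ)))‖ = y * Real.exp (-(a * y)) := by
    intro y hy
    rw [norm_mul, Complex.norm_exp,
      Complex.norm_real, Real.norm_eq_abs, abs_of_pos hy]
    congr 1
    simp [Complex.neg_re, Complex.mul_re, ha]
  have i4 : Integrable (fun y : ℝ => (y : ℂ) * Complex.exp (-(z * (y : ℂ)))) φ.μ := by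
    refine aux_integrable φ.hint haep (Continuous.aestronglyMeasurable (by fun_prop))
      (C := max 1 a⁻¹) fun y hy => ?_
    rw [hnorm4 y hy]
    have hexp : 0 < Real.exp (-(a * y)) := Real.exp_pos _
    have hexp1 : Real.exp (-(a * y)) ≤ 1 := Real.exp_le_one_iff.mpr (by nlinarith)
    rcases le_total y 1 with hy1 | hy1
    · rw [min_eq_right hy1]
      have h1 : (1:ℝ) ≤ max 1 a⁻¹ := le_max_left _ _
      nlinarith
    · rw [min_eq_left hy1]
      have h1 : a⁻¹ ≤ max 1 a⁻¹ := le_max_right _ _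
      have key : y * Real.exp (-(a * y)) ≤ a⁻¹ := by
        rw [← one_div]
        refine (le_div_iff₀ hz).mpr ?_
        nlinarith [aux_t_exp (a * y)]
      linarith
  -- numerator bound : |φ'(z)| ≤ φ'(a)
  have hnum : ‖φ.deriv1C z‖ ≤ φ.deriv1 a := by
    rw [BernsteinFn.deriv1C, BernsteinFn.deriv1]
    calc ‖(φ.δ : ℂ) + ∫ y, (y : ℂ) * Complex.exp (-(z * (y : ℂ))) ∂φ.μ‖
        ≤ ‖(φ.δ : ℂ)‖ + ‖∫ y, (y : ℂ) * Complex.exp (-(z * (y : ℂ))) ∂φ.μ‖ :=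
          norm_add_le _ _
      _ ≤ φ.δ + ∫ y, y * Real.exp (-(a * y)) ∂φ.μ := by
          refine add_le_add ?_ ?_
          · rw [Complex.norm_real, Real.norm_eq_abs, abs_of_nonneg φ.hδ]
          · calc ‖∫ y, (y : ℂ) * Complex.exp (-(z * (y : ℂ))) ∂φ.μ‖
                ≤ ∫ y, ‖(y : ℂ) * Complex.exp (-(z * (y : ℂ)))‖ ∂φ.μ :=
                  norm_integral_le_integral_norm _
              _ = ∫ y, y * Real.exp (-(a * y)) ∂φ.μ := by
                  refine integral_congr_ae (haep.mono fun y hy => ?_)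
                  exact hnorm4 y hy
  -- denominator bound : φ(a) ≤ Re φ(z) ≤ |φ(z)|
  have hre : (φ.toFunC z).re
      = φ.κ + φ.δ * a + ∫ y, (1 - Complex.exp (-(z * (y:ℂ)))).re ∂φ.μ := by
    rw [BernsteinFn.toFunC]
    simp only [Complex.add_re, Complex.ofReal_re, Complex.mul_re, Complex.ofReal_im,
      zero_mul, sub_zero]
    congr 1
    simp only [← RCLike.re_eq_complex_re]
    exact (integral_re i3).symm
  have i3re : Integrable (fun y : ℝ => (1 - Complex.exp (-(z * (y:ℂ)))).re) φ.μ := by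
    have := i3.re
    simpa [RCLike.re_eq_complex_re] using this
  have hden : φ.toFun a ≤ ‖φ.toFunC z‖ := by
    have hle : φ.toFun a ≤ (φ.toFunC z).re := by
      rw [hre, BernsteinFn.toFun]
      have hint : (∫ y, (1 - Real.exp (-(a * y))) ∂φ.μ)
          ≤ ∫ y, (1 - Complex.exp (-(z * (y:ℂ)))).re ∂φ.μ := by
        refine integral_mono i1 i3re fun y => ?_
        simp only [Complex.sub_re, Complex.one_re, Complex.exp_re, Complex.neg_re,
          Complex.mul_re, Complex.ofReal_re, Complex.ofReal_im, mul_zero, sub_zero,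
          Complex.neg_im, Complex.mul_im, zero_mul, add_zero, zero_add, ← ha]
        have h1 : Real.cos (-(z.im * y)) ≤ 1 := Real.cos_le_one _
        have h2 : 0 < Real.exp (-(a * y)) := Real.exp_pos _
        nlinarith
      linarith
    calc φ.toFun a ≤ (φ.toFunC z).re := hle
      _ ≤ ‖φ.toFunC z‖ := Complex.re_le_norm _
  -- positivity of φ(a)
  have hint_nonneg : 0 ≤ ∫ y, (1 - Real.exp (-(a * y))) ∂φ.μ := by
    refine integral_nonneg_of_ae (haep.mono fun y hy => ?_)
    simp only [Pi.zero_apply]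
    have : Real.exp (-(a * y)) ≤ 1 := Real.exp_le_one_iff.mpr (by nlinarith)
    linarith
  have hda : 0 ≤ φ.deriv1 a := by
    rw [BernsteinFn.deriv1]
    have : 0 ≤ ∫ y, y * Real.exp (-(a * y)) ∂φ.μ := by
      refine integral_nonneg_of_ae (haep.mono fun y hy => ?_)
      simp only [Pi.zero_apply]
      positivity
    linarith [φ.hδ]
  have hpos : 0 < φ.toFun a := by
    rw [BernsteinFn.toFun]
    rcases lt_or_eq_of_le (add_nonneg φ.hκ (mul_nonneg φ.hδ hz.le) : (0:ℝ) ≤ φ.κ + φ.δ * a) with h | h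
    · linarith
    · -- κ + δ a = 0 so κ = 0, δ = 0
      have hκ0 : φ.κ = 0 := by nlinarith [φ.hκ, φ.hδ, hz]
      have hδ0 : φ.δ = 0 := by nlinarith [φ.hκ, φ.hδ, hz]
      have hμne : φ.μ ≠ 0 := fun h0 => φ.nontriv ⟨hκ0, hδ0, h0⟩
      have : 0 < ∫ y, (1 - Real.exp (-(a * y))) ∂φ.μ := by
        rcases hint_nonneg.lt_or_eq with h' | h'
        · exact h'
        · exfalso
          have hnn : 0 ≤ᵐ[φ.μ] fun y => 1 - Real.exp (-(a * y)) :=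
            haep.mono fun y hy => by
              simp only [Pi.zero_apply]
              have : Real.exp (-(a * y)) ≤ 1 := Real.exp_le_one_iff.mpr (by nlinarith)
              linarith
          have hz0 : ∀ᵐ y ∂φ.μ, (1 - Real.exp (-(a * y))) = 0 := by
            have heq0 := (integral_eq_zero_iff_of_nonneg_ae hnn i1).mp h'.symm
            filter_upwards [heq0] with y hy using by simpa using hy
          have hfalse : ∀ᵐ (_ : ℝ) ∂φ.μ, False := by
            filter_upwards [haep, hz0] with y hy hzero
            have hlt : Real.exp (-(a * y)) < 1 := by
              apply Real.exp_lt_one_iff.mpr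
              nlinarith
            linarith
          have : φ.μ Set.univ = 0 := by
            simpa [ae_iff] using hfalse
          exact hμne (Measure.measure_univ_eq_zero.mp this)
      linarith
  -- a φ'(a) ≤ φ(a)
  have hE : a * φ.deriv1 a ≤ φ.toFun a := by
    rw [BernsteinFn.deriv1, BernsteinFn.toFun]
    have hmono : (∫ y, a * (y * Real.exp (-(a * y))) ∂φ.μ)
        ≤ ∫ y, (1 - Real.exp (-(a * y))) ∂φ.μ := by
      refine integral_mono (i2.const_mul a) i1 fun y => ?_
      have := aux_t_exp (a * y)
      simp only
      nlinarith
    rw [integral_const_mul] at hmono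
    have := φ.hκ
    nlinarith
  -- assemble
  have hs1 : (1:ℝ) ≤ Real.sqrt 10 := by
    rw [show (1:ℝ) = Real.sqrt 1 by simp]
    exact Real.sqrt_le_sqrt (by norm_num)
  have habs_pos : 0 < ‖φ.toFunC z‖ := lt_of_lt_of_le hpos hden
  constructor
  · rw [norm_div]
    calc ‖φ.deriv1C z‖ / ‖φ.toFunC z‖
        ≤ φ.deriv1 a / φ.toFun a := div_le_div₀ hda hnum hpos hden
      _ ≤ Real.sqrt 10 * (φ.deriv1 a / φ.toFun a) :=
        le_mul_of_one_le_left (div_nonneg hda hpos.le) hs1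
  · have hdiv : φ.deriv1 a / φ.toFun a ≤ 1 / a := by
      rw [div_le_div_iff₀ hpos hz]
      nlinarith
    calc Real.sqrt 10 * (φ.deriv1 a / φ.toFun a)
        ≤ Real.sqrt 10 * (1 / a) := by
          exact mul_le_mul_of_nonneg_left hdiv (Real.sqrt_nonneg _)
      _ = Real.sqrt 10 / a := by rw [mul_one_div]
end

section
/- Let f: (0,∞) → ℝ be measurable with f_{a'}(y) := e^{-a'y} f(y) bounded (i.e. ‖f_{a'}‖_∞ < ∞) for some a' ≥ 0. Then for every a ≥ a', every integer n ≥ 1 and every y > 0, the n-fold convolution satisfies |e^{-ay} f^{*n}(y)| ≤ ‖f_{a'}‖_∞^n · y^{n-1} e^{-(a-a')y} / (n-1)!. -/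
open MeasureTheory

/-- The iterated convolution on `(0,∞)`: `convPow f n = f^{*(n+1)}`, where
`f^{*1} = f` and `f^{*(n+1)}(y) = ∫₀^y f^{*n}(y-v) f(v) dv`. -/
noncomputable def convPow (f : ℝ → ℝ) : ℕ → ℝ → ℝ
  | 0 => f
  | n + 1 => fun y => ∫ v in (0 : ℝ)..y, convPow f n (y - v) * f v

lemma convPow_bound (f : ℝ → ℝ) (a' M : ℝ)
    (hM : ∀ y : ℝ, 0 < y → |Real.exp (-(a' * y)) * f y| ≤ M) :
    ∀ n : ℕ, ∀ y : ℝ, 0 < y →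
      |convPow f n y| ≤ M ^ (n + 1) * y ^ n * Real.exp (a' * y) / n.factorial := by
  have hM0 : 0 ≤ M := le_trans (abs_nonneg _) (hM 1 one_pos)
  have hbase : ∀ y : ℝ, 0 < y → |f y| ≤ M * Real.exp (a' * y) := by
    intro y hy
    have h := hM y hy
    rw [abs_mul, abs_of_pos (Real.exp_pos _)] at h
    calc |f y| = Real.exp (a' * y) * (Real.exp (-(a' * y)) * |f y|) := by
          rw [← mul_assoc, ← Real.exp_add]; simp
      _ ≤ Real.exp (a' * y) * M := mul_le_mul_of_nonneg_left h (Real.exp_pos _).le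
      _ = M * Real.exp (a' * y) := mul_comm _ _
  intro n
  induction n with
  | zero =>
    intro y hy
    simpa [convPow] using hbase y hy
  | succ n ih =>
    intro y hy
    have hae : ∀ᵐ v ∂(volume.restrict (Set.uIoc (0:ℝ) y)),
        ‖convPow f n (y - v) * f v‖
          ≤ (M ^ (n + 1) * (y - v) ^ n * Real.exp (a' * (y - v)) / n.factorial)
            * (M * Real.exp (a' * v)) := by
      have hne : ∀ᵐ v ∂(volume.restrict (Set.uIoc (0:ℝ) y)), v ≠ y :=
        ae_restrict_of_ae (by
          rw [Filter.eventually_iff, mem_ae_iff]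
          simpa using measure_singleton (α := ℝ) y)
      filter_upwards [ae_restrict_mem measurableSet_uIoc, hne] with v hv hvne
      rw [Set.uIoc_of_le hy.le] at hv
      have hv0 : 0 < v := hv.1
      have hvy : 0 < y - v := sub_pos.2 (lt_of_le_of_ne hv.2 hvne)
      rw [Real.norm_eq_abs, abs_mul]
      exact mul_le_mul (ih _ hvy) (hbase v hv0) (abs_nonneg _)
        (by positivity)
    have hint : IntervalIntegrable
        (fun v => (M ^ (n + 1) * (y - v) ^ n * Real.exp (a' * (y - v)) / n.factorial)
            * (M * Real.exp (a' * v))) volume 0 y := by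
      apply Continuous.intervalIntegrable
      continuity
    have key := intervalIntegral.norm_integral_le_abs_of_norm_le hae hint
    have heval : (∫ v in (0:ℝ)..y,
        (M ^ (n + 1) * (y - v) ^ n * Real.exp (a' * (y - v)) / n.factorial)
          * (M * Real.exp (a' * v)))
        = M ^ (n + 2) * Real.exp (a' * y) / n.factorial * ∫ v in (0:ℝ)..y, (y - v) ^ n := by
      rw [← intervalIntegral.integral_const_mul]
      apply intervalIntegral.integral_congr
      intro v _
      dsimp only
      rw [mul_sub, Real.exp_sub]
      field_simp
      ring
    have hpow : (∫ v in (0:ℝ)..y, (y - v) ^ n) = y ^ (n + 1) / (n + 1) := by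
      have := intervalIntegral.integral_comp_sub_left (a := (0:ℝ)) (b := y)
        (fun u => u ^ n) y
      simp only [sub_zero, sub_self] at this
      rw [this, integral_pow]
      norm_num
    rw [heval, hpow] at key
    calc |convPow f (n + 1) y| = ‖∫ v in (0:ℝ)..y, convPow f n (y - v) * f v‖ := by
          simp [convPow]
      _ ≤ M ^ (n + 2) * Real.exp (a' * y) / n.factorial * (y ^ (n + 1) / (n + 1)) := by
          refine key.trans (le_of_eq (abs_of_nonneg ?_))
          positivity
      _ = M ^ (n + 1 + 1) * y ^ (n + 1) * Real.exp (a' * y) / (n + 1).factorial := by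
          rw [Nat.factorial_succ]
          push_cast
          field_simp

/-- If `f_{a'}(y) = e^{-a' y} f(y)` is bounded by `M` on `(0,∞)` for some `a' ≥ 0`, then for
every `a ≥ a'`, every `n ≥ 1` and `y > 0`,
`|e^{-a y} f^{*n}(y)| ≤ M^n · y^{n-1} e^{-(a-a') y} / (n-1)!`. -/
theorem stmt9 (f : ℝ → ℝ) (hf : Measurable f) (a' M : ℝ) (ha' : 0 ≤ a')
    (hM : ∀ y : ℝ, 0 < y → |Real.exp (-(a' * y)) * f y| ≤ M)
    (a : ℝ) (ha : a' ≤ a) (n : ℕ) (y : ℝ) (hy : 0 < y) :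
    |Real.exp (-(a * y)) * convPow f n y|
      ≤ M ^ (n + 1) * y ^ n * Real.exp (-((a - a') * y)) / n.factorial := by
  have h := convPow_bound f a' M hM n y hy
  rw [abs_mul, abs_of_pos (Real.exp_pos _)]
  have h2 := mul_le_mul_of_nonneg_left h (Real.exp_pos (-(a * y))).le
  calc Real.exp (-(a * y)) * |convPow f n y|
      ≤ Real.exp (-(a * y)) * (M ^ (n + 1) * y ^ n * Real.exp (a' * y) / n.factorial) := h2
    _ = M ^ (n + 1) * y ^ n * Real.exp (-((a - a') * y)) / n.factorial := by
        rw [show -((a - a') * y) = -(a * y) + a' * y by ring, Real.exp_add]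
        ring
end

section
/- Let φ be a Bernstein function with κ = φ(0) ≥ 0 and for q ≥ 0 set φ^{†q}(z) = q + φ(z). Then for every fixed z = a + ib with a > 0, the map q ↦ A_{φ^{†q}}(z) := ∫₀^b arg φ^{†q}(a+iu) du is non-increasing on [0,∞). -/
open MeasureTheory Filter Set

namespace BernsteinFn

lemma ae_pos (φ : BernsteinFn) : ∀ᵐ y ∂φ.μ, 0 < y := by
  rw [MeasureTheory.ae_iff]
  have : {y : ℝ | ¬ 0 < y} = Set.Iic 0 := by ext y; simp
  rw [this]; exact φ.hsupp

lemma aux_norm_bound {z : ℂ} (hz : 0 ≤ z.re) {y : ℝ} (hy : 0 ≤ y) :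
    ‖1 - Complex.exp (-(z * y))‖ ≤ (2 + 2 * ‖z‖) * min 1 y := by
  have habs : ‖(-(z * (y:ℂ)))‖ = ‖z‖ * y := by
    simp [abs_of_nonneg hy]
  have hexp : ‖(Complex.exp (-(z * y)))‖ ≤ 1 := by
    rw [Complex.norm_exp]
    have : (-(z * (y:ℂ))).re = -(z.re * y) := by simp
    rw [this]
    exact Real.exp_le_one_iff.mpr (by nlinarith)
  rcases le_or_gt (‖z‖ * y) 1 with h | h
  · have h1 : ‖1 - Complex.exp (-(z * y))‖ = ‖(Complex.exp (-(z * y)) - 1)‖ := by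
      rw [norm_sub_rev]
    have h2 := Complex.norm_exp_sub_one_le (x := -(z * y)) (by rw [habs]; exact h)
    rw [h1, habs] at *
    rcases le_or_gt y 1 with hy1 | hy1
    · have : min 1 y = y := min_eq_right hy1
      rw [this]; nlinarith [norm_nonneg z]
    · have : min 1 y = 1 := min_eq_left hy1.le
      rw [this]; nlinarith [norm_nonneg z]
  · have h1 : ‖1 - Complex.exp (-(z * y))‖ ≤ 2 := by
      calc ‖1 - Complex.exp (-(z * y))‖ ≤ ‖(1:ℂ)‖ + ‖Complex.exp (-(z * y))‖ := norm_sub_le _ _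
      _ ≤ 1 + 1 := by rw [norm_one]; linarith [hexp]
      _ = 2 := by norm_num
    rcases le_or_gt y 1 with hy1 | hy1
    · have hm : min 1 y = y := min_eq_right hy1
      rw [hm]
      nlinarith [norm_nonneg z]
    · have hm : min 1 y = 1 := min_eq_left hy1.le
      rw [hm]; nlinarith [norm_nonneg z]

lemma integrable_kernC (φ : BernsteinFn) {z : ℂ} (hz : 0 ≤ z.re) :
    Integrable (fun y : ℝ => 1 - Complex.exp (-(z * y))) φ.μ := by
  apply Integrable.mono' (φ.hint.const_mul (2 + 2 * ‖z‖))
  · exact (Continuous.aestronglyMeasurable (by continuity))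
  · filter_upwards [φ.ae_pos] with y hy
    exact aux_norm_bound hz hy.le

lemma integrable_kernR (φ : BernsteinFn) {u : ℝ} (hu : 0 ≤ u) :
    Integrable (fun y : ℝ => 1 - Real.exp (-(u * y))) φ.μ := by
  apply Integrable.mono' (φ.hint.const_mul (1 + u))
  · exact (Continuous.aestronglyMeasurable (by continuity))
  · filter_upwards [φ.ae_pos] with y hy
    have h1 : Real.exp (-(u * y)) ≤ 1 := Real.exp_le_one_iff.mpr (by nlinarith)
    have h2 : 1 - (u * y) ≤ Real.exp (-(u * y)) := by
      have := Real.add_one_le_exp (-(u * y)); linarith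
    rw [Real.norm_eq_abs, abs_of_nonneg (by linarith)]
    rcases le_or_gt y 1 with hy1 | hy1
    · rw [min_eq_right hy1]; nlinarith
    · rw [min_eq_left hy1.le]; nlinarith [Real.exp_nonneg (-(u * y))]

lemma toFunC_ofReal (φ : BernsteinFn) {x : ℝ} (hx : 0 ≤ x) :
    φ.toFunC (x : ℂ) = (φ.toFun x : ℂ) := by
  unfold toFunC toFun
  have h1 : (fun y : ℝ => 1 - Complex.exp (-((x:ℂ) * y))) =
      fun y : ℝ => Complex.ofRealCLM (1 - Real.exp (-(x * y))) := by
    funext y; simp only [Complex.ofRealCLM_apply]; push_cast [← Complex.ofReal_exp]; norm_num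
  rw [h1, ContinuousLinearMap.integral_comp_comm _ (φ.integrable_kernR hx)]
  simp only [Complex.ofRealCLM_apply]; push_cast; ring

end BernsteinFn

namespace BernsteinFn

lemma re_toFunC_ge (φ : BernsteinFn) {z : ℂ} (hz : 0 ≤ z.re) :
    φ.toFun z.re ≤ (φ.toFunC z).re := by
  unfold toFunC toFun
  have hre : (∫ y, (1 - Complex.exp (-(z * y))) ∂φ.μ).re
      = ∫ y, (1 - Complex.exp (-(z * y))).re ∂φ.μ := by
    have := ContinuousLinearMap.integral_comp_comm Complex.reCLM (φ.integrable_kernC hz)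
    simpa using this.symm
  simp only [Complex.add_re, Complex.mul_re, Complex.ofReal_re, Complex.ofReal_im]
  rw [hre]
  have hmono : ∫ y, (1 - Real.exp (-(z.re * y))) ∂φ.μ
      ≤ ∫ y, (1 - Complex.exp (-(z * y))).re ∂φ.μ := by
    have hreint : Integrable (fun y : ℝ => (1 - Complex.exp (-(z * y))).re) φ.μ := by
      simpa [RCLike.re_to_complex] using (φ.integrable_kernC hz).re
    apply integral_mono_ae (φ.integrable_kernR hz) hreint
    filter_upwards [φ.ae_pos] with y hy
    have h1 : (1 - Complex.exp (-(z * y))).re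
        = 1 - Real.exp (-(z.re * y)) * Real.cos (z.im * y) := by
      rw [Complex.sub_re, Complex.exp_re]
      have h2 : (-(z * (y:ℂ))).re = -(z.re * y) := by simp
      have h3 : (-(z * (y:ℂ))).im = -(z.im * y) := by simp
      rw [h2, h3, Real.cos_neg]; simp
    rw [h1]
    have := Real.cos_le_one (z.im * y)
    nlinarith [Real.exp_pos (-(z.re * y))]
  simp only [Complex.ofReal_im, mul_zero, zero_mul, sub_zero] at *
  linarith

lemma toFun_mono_add (φ : BernsteinFn) {x x' : ℝ} (hx : 0 ≤ x) (h : x ≤ x') :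
    φ.toFun x + φ.δ * (x' - x) ≤ φ.toFun x' := by
  unfold toFun
  have hmono : ∫ y, (1 - Real.exp (-(x * y))) ∂φ.μ
      ≤ ∫ y, (1 - Real.exp (-(x' * y))) ∂φ.μ := by
    apply integral_mono_ae (φ.integrable_kernR hx) (φ.integrable_kernR (hx.trans h))
    filter_upwards [φ.ae_pos] with y hy
    have : Real.exp (-(x' * y)) ≤ Real.exp (-(x * y)) :=
      Real.exp_le_exp.mpr (by nlinarith)
    linarith
  nlinarith

lemma toFun_pos (φ : BernsteinFn) {x : ℝ} (hx : 0 < x) : 0 < φ.toFun x := by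
  have hins : ∀ᵐ y ∂φ.μ, 0 ≤ 1 - Real.exp (-(x * y)) := by
    filter_upwards [φ.ae_pos] with y hy
    have : Real.exp (-(x * y)) ≤ 1 := Real.exp_le_one_iff.mpr (by nlinarith)
    linarith
  have hI : 0 ≤ ∫ y, (1 - Real.exp (-(x * y))) ∂φ.μ := integral_nonneg_of_ae hins
  have hsum : 0 ≤ φ.toFun x := by
    unfold toFun; nlinarith [φ.hκ, φ.hδ]
  rcases hsum.lt_or_eq with h | h
  · exact h
  exfalso
  -- all three pieces vanish
  unfold toFun at h
  have hκ0 : φ.κ = 0 := by nlinarith [φ.hκ, φ.hδ]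
  have hδ0 : φ.δ = 0 := by nlinarith [φ.hκ, φ.hδ]
  have hI0 : ∫ y, (1 - Real.exp (-(x * y))) ∂φ.μ = 0 := by
    nlinarith [φ.hκ, φ.hδ]
  have hzero : (fun y => 1 - Real.exp (-(x * y))) =ᵐ[φ.μ] 0 :=
    (integral_eq_zero_iff_of_nonneg_ae hins (φ.integrable_kernR hx.le)).mp hI0
  have hfalse : ∀ᵐ (_ : ℝ) ∂φ.μ, False := by
    filter_upwards [φ.ae_pos, hzero] with y hy hz
    simp only [Pi.zero_apply] at hz
    have : Real.exp (-(x * y)) = 1 := by linarith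
    have h2 : -(x * y) = (0:ℝ) := by
      have := Real.exp_eq_exp (x := -(x * y)) (y := 0)
      rw [Real.exp_zero] at this
      exact this.mp ‹Real.exp (-(x * y)) = 1›
    nlinarith
  have : φ.μ = 0 := by
    have huniv : φ.μ Set.univ = 0 := by simpa [MeasureTheory.ae_iff] using hfalse
    exact MeasureTheory.Measure.measure_univ_eq_zero.mp huniv
  exact φ.nontriv ⟨hκ0, hδ0, this⟩

end BernsteinFn

namespace BernsteinFn

lemma y_exp_le {r y : ℝ} (hr : 0 < r) (hy : 0 ≤ y) :
    y * Real.exp (-(r * y)) ≤ (1 + 1/r) * min 1 y := by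
  have key : ∀ t : ℝ, 0 ≤ t → t * Real.exp (-t) ≤ 1 := by
    intro t ht
    have h1 : t ≤ Real.exp t := by nlinarith [Real.add_one_le_exp t]
    have h2 : Real.exp (-t) = (Real.exp t)⁻¹ := Real.exp_neg t
    rw [h2]
    rw [mul_inv_le_iff₀ (Real.exp_pos t)]
    linarith
  rcases le_or_gt y 1 with hy1 | hy1
  · rw [min_eq_right hy1]
    have : Real.exp (-(r * y)) ≤ 1 := Real.exp_le_one_iff.mpr (by nlinarith)
    have hrpos : 0 < 1/r := by positivity
    nlinarith
  · rw [min_eq_left hy1.le]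
    have h3 := key (r * y) (by positivity)
    have : y * Real.exp (-(r * y)) = (1/r) * ((r*y) * Real.exp (-(r*y))) := by
      field_simp
    rw [this]
    have hrpos : 0 < 1/r := by positivity
    nlinarith

lemma differentiableAt_toFunC (φ : BernsteinFn) {z : ℂ} (hz : 0 < z.re) :
    DifferentiableAt ℂ φ.toFunC z := by
  have hint : DifferentiableAt ℂ
      (fun w : ℂ => ∫ y, (1 - Complex.exp (-(w * (y : ℂ)))) ∂φ.μ) z := by
    set r := z.re / 2 with hr
    have hrpos : 0 < r := by positivity
    have hεpos : (0:ℝ) < z.re / 2 := by positivity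
    have main := hasDerivAt_integral_of_dominated_loc_of_deriv_le
      (μ := φ.μ) (𝕜 := ℂ)
      (F := fun (w : ℂ) (y : ℝ) => 1 - Complex.exp (-(w * (y : ℂ))))
      (F' := fun (w : ℂ) (y : ℝ) => (y : ℂ) * Complex.exp (-(w * (y : ℂ))))
      (x₀ := z) (bound := fun y => (1 + 1/r) * min 1 y)
      (s := Metric.ball z (z.re / 2)) (Metric.ball_mem_nhds z hεpos)
      ?_ ?_ ?_ ?_ ?_ ?_
    · exact main.2.differentiableAt
    · exact Filter.Eventually.of_forall fun w =>
        (Continuous.aestronglyMeasurable (by continuity))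
    · exact φ.integrable_kernC hz.le
    · exact Continuous.aestronglyMeasurable (by continuity)
    · filter_upwards [φ.ae_pos] with y hy
      intro w hw
      have hwre : r < w.re := by
        have h1 : |w.re - z.re| ≤ ‖(w - z)‖ := by
          simpa using Complex.abs_re_le_norm (w - z)
        have h2 : ‖(w - z)‖ < z.re / 2 := by
          simpa [Metric.mem_ball, dist_eq_norm] using hw
        have := abs_lt.mp (lt_of_le_of_lt h1 h2)
        simp only [hr]; linarith [this.1]
      have hnorm : ‖(y : ℂ) * Complex.exp (-(w * (y : ℂ)))‖
          = y * Real.exp (-(w.re * y)) := by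
        rw [norm_mul, Complex.norm_exp,
          Complex.norm_real, Real.norm_eq_abs, abs_of_nonneg hy.le]
        congr 2
        simp
      rw [hnorm]
      calc y * Real.exp (-(w.re * y)) ≤ y * Real.exp (-(r * y)) := by
            apply mul_le_mul_of_nonneg_left _ hy.le
            exact Real.exp_le_exp.mpr (by nlinarith)
        _ ≤ (1 + 1/r) * min 1 y := y_exp_le hrpos hy.le
    · exact φ.hint.const_mul _
    · filter_upwards [φ.ae_pos] with y hy
      intro w hw
      have h1 : HasDerivAt (fun w : ℂ => -(w * (y:ℂ))) (-(y:ℂ)) w := by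
        exact ((hasDerivAt_id' w).mul_const (y:ℂ)).neg.congr_deriv (by ring)
      have h2 := h1.cexp
      have h3 := (hasDerivAt_const w (1:ℂ)).sub h2
      convert h3 using 1
      · rfl
      · ring
  have h1 : DifferentiableAt ℂ (fun w : ℂ => (φ.κ : ℂ) + (φ.δ : ℂ) * w) z :=
    (differentiableAt_const _).add ((differentiableAt_id).const_mul _)
  have := h1.add hint
  exact this

lemma continuousAt_toFunC (φ : BernsteinFn) {z : ℂ} (hz : 0 < z.re) :
    ContinuousAt φ.toFunC z := (φ.differentiableAt_toFunC hz).continuousAt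

end BernsteinFn

namespace BernsteinFn

lemma psi_re_ge (φ : BernsteinFn) {q a : ℝ} (hq : 0 ≤ q) (ha : 0 < a) {z : ℂ}
    (hz : a ≤ z.re) :
    φ.toFun a + φ.δ * (z.re - a) ≤ ((q:ℂ) + φ.toFunC z).re := by
  have h1 := φ.re_toFunC_ge (z := z) ((ha.trans_le hz).le)
  have h2 := φ.toFun_mono_add ha.le hz
  simp only [Complex.add_re, Complex.ofReal_re]
  linarith

lemma psi_re_pos (φ : BernsteinFn) {q a : ℝ} (hq : 0 ≤ q) (ha : 0 < a) {z : ℂ}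
    (hz : a ≤ z.re) : 0 < ((q:ℂ) + φ.toFunC z).re := by
  have := φ.psi_re_ge hq ha hz
  have h1 := φ.toFun_pos ha
  nlinarith [φ.hδ]

lemma psi_ne_zero (φ : BernsteinFn) {q a : ℝ} (hq : 0 ≤ q) (ha : 0 < a) {z : ℂ}
    (hz : a ≤ z.re) : ((q:ℂ) + φ.toFunC z) ≠ 0 := by
  intro h0
  have := φ.psi_re_pos hq ha hz
  rw [h0] at this; simp at this

lemma re_inv_le {t : ℝ} (ht : 0 < t) {ζ : ℂ} (hζ : t ≤ ζ.re) : (ζ⁻¹).re ≤ t⁻¹ := by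
  have hζre : 0 < ζ.re := ht.trans_le hζ
  have hns : 0 < Complex.normSq ζ := by
    rw [Complex.normSq_apply]; nlinarith [sq_nonneg ζ.im]
  rw [Complex.inv_re, div_le_iff₀ hns, Complex.normSq_apply]
  have h1 : t * ζ.re ≤ ζ.re * ζ.re + ζ.im * ζ.im := by nlinarith [sq_nonneg ζ.im]
  have h2 : 0 < t⁻¹ := inv_pos.mpr ht
  nlinarith [mul_inv_cancel₀ ht.ne']

lemma re_h_mono (φ : BernsteinFn) {q a : ℝ} (hq : 0 ≤ q) (ha : 0 < a) {x : ℝ}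
    (hx : a ≤ x) (b : ℝ) :
    (((q:ℂ) + φ.toFunC ((x:ℂ) + (b:ℂ) * Complex.I))⁻¹).re
      ≤ (((q:ℂ) + φ.toFunC (x:ℂ))⁻¹).re := by
  have hxpos : (0:ℝ) < x := ha.trans_le hx
  set t := q + φ.toFun x with hts
  have htpos : 0 < t := by
    have h1 := φ.toFun_pos hxpos
    simp only [hts]; linarith
  have hreal : (q:ℂ) + φ.toFunC (x:ℂ) = ((t:ℝ):ℂ) := by
    rw [φ.toFunC_ofReal hxpos.le]; push_cast [hts]; ring
  have hre : t ≤ ((q:ℂ) + φ.toFunC ((x:ℂ) + (b:ℂ) * Complex.I)).re := by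
    have hzre : ((x:ℂ) + (b:ℂ) * Complex.I).re = x := by simp
    have := φ.re_toFunC_ge (z := (x:ℂ) + (b:ℂ) * Complex.I) (by rw [hzre]; exact hxpos.le)
    rw [hzre] at this
    simp only [Complex.add_re, Complex.ofReal_re, hts]
    linarith
  rw [hreal, ← Complex.ofReal_inv]
  simp only [Complex.ofReal_re]
  exact re_inv_le htpos hre

lemma im_toFunC_bound (φ : BernsteinFn) {z : ℂ} (hz : 0 ≤ z.re) {B : ℝ}
    (hB : |z.im| ≤ B) :
    |(φ.toFunC z).im| ≤ φ.δ * B + ∫ y, Real.exp (-(z.re * y)) * ((1+B) * min 1 y) ∂φ.μ := by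
  have hBnn : 0 ≤ B := (abs_nonneg _).trans hB
  unfold toFunC
  have him : (∫ y, (1 - Complex.exp (-(z * y))) ∂φ.μ).im
      = ∫ y, (1 - Complex.exp (-(z * y))).im ∂φ.μ := by
    have := ContinuousLinearMap.integral_comp_comm Complex.imCLM (φ.integrable_kernC hz)
    simpa using this.symm
  simp only [Complex.add_im, Complex.mul_im, Complex.ofReal_im, Complex.ofReal_re,
    zero_mul, add_zero, zero_add]
  rw [him]
  have habs : |∫ y, (1 - Complex.exp (-(z * y))).im ∂φ.μ|
      ≤ ∫ y, Real.exp (-(z.re * y)) * ((1+B) * min 1 y) ∂φ.μ := by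
    calc |∫ y, (1 - Complex.exp (-(z * y))).im ∂φ.μ|
        ≤ ∫ y, |(1 - Complex.exp (-(z * y))).im| ∂φ.μ := by
          simpa [Real.norm_eq_abs] using
            MeasureTheory.norm_integral_le_integral_norm
              (fun y : ℝ => (1 - Complex.exp (-(z * y))).im) (μ := φ.μ)
      _ ≤ ∫ y, Real.exp (-(z.re * y)) * ((1+B) * min 1 y) ∂φ.μ := by
          apply integral_mono_ae
          · have : Integrable (fun y : ℝ => (1 - Complex.exp (-(z * y))).im) φ.μ := by
              simpa [RCLike.im_to_complex] using (φ.integrable_kernC hz).im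
            exact this.abs
          · apply Integrable.mono' (φ.hint.const_mul ((1+B)))
            · exact Continuous.aestronglyMeasurable
                (((Real.continuous_exp.comp ((continuous_const.mul continuous_id).neg)).mul
                (continuous_const.mul (continuous_const.min continuous_id)) : Continuous fun y : ℝ => Real.exp (-(z.re * y)) * ((1+B) * min 1 y)))
            · filter_upwards [φ.ae_pos] with y hy
              have he : Real.exp (-(z.re * y)) ≤ 1 := Real.exp_le_one_iff.mpr (by nlinarith)
              have hmn : (0:ℝ) ≤ min 1 y := le_min zero_le_one hy.le
              rw [Real.norm_eq_abs, _root_.abs_of_nonneg (by positivity)]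
              exact mul_le_of_le_one_left (by positivity) he
          · filter_upwards [φ.ae_pos] with y hy
            have h1 : (1 - Complex.exp (-(z * y))).im
                = -(Real.exp (-(z.re * y)) * Real.sin (-(z.im * y))) := by
              rw [Complex.sub_im, Complex.exp_im]
              have h2 : (-(z * (y:ℂ))).re = -(z.re * y) := by simp
              have h3 : (-(z * (y:ℂ))).im = -(z.im * y) := by simp
              rw [h2, h3]; simp
            rw [h1, abs_neg, abs_mul, Real.abs_exp]
            have hs1 : |Real.sin (-(z.im * y))| ≤ 1 := Real.abs_sin_le_one _
            have hs2 : |Real.sin (-(z.im * y))| ≤ B * y := by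
              calc |Real.sin (-(z.im * y))| ≤ |(-(z.im * y))| := Real.abs_sin_le_abs
                _ = |z.im| * y := by rw [abs_neg, abs_mul, _root_.abs_of_nonneg hy.le]
                _ ≤ B * y := by nlinarith
            have hmin : |Real.sin (-(z.im * y))| ≤ (1+B) * min 1 y := by
              rcases le_or_gt y 1 with hy1 | hy1
              · rw [min_eq_right hy1]; nlinarith [abs_nonneg (Real.sin (-(z.im * y)))]
              · rw [min_eq_left hy1.le]; nlinarith
            have he := Real.exp_pos (-(z.re * y))
            nlinarith
  have hd : |φ.δ * z.im| ≤ φ.δ * B := by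
    rw [abs_mul, _root_.abs_of_nonneg φ.hδ]
    exact mul_le_mul_of_nonneg_left hB φ.hδ
  calc |φ.δ * z.im + ∫ y, (1 - Complex.exp (-(z * y))).im ∂φ.μ|
      ≤ |φ.δ * z.im| + |∫ y, (1 - Complex.exp (-(z * y))).im ∂φ.μ| := abs_add_le _ _
    _ ≤ φ.δ * B + ∫ y, Real.exp (-(z.re * y)) * ((1+B) * min 1 y) ∂φ.μ := by
        linarith

lemma eps_nonneg (φ : BernsteinFn) {C R : ℝ} (hC : 0 ≤ C) :
    0 ≤ ∫ y, Real.exp (-(R * y)) * (C * min 1 y) ∂φ.μ := by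
  apply integral_nonneg_of_ae
  filter_upwards [φ.ae_pos] with y hy
  have : (0:ℝ) ≤ min 1 y := le_min zero_le_one hy.le
  positivity

lemma tendsto_eps (φ : BernsteinFn) {C : ℝ} (hC : 0 ≤ C) :
    Tendsto (fun R : ℝ => ∫ y, Real.exp (-(R * y)) * (C * min 1 y) ∂φ.μ)
      atTop (nhds 0) := by
  have key := MeasureTheory.tendsto_integral_filter_of_dominated_convergence
    (μ := φ.μ) (l := atTop)
    (F := fun (R : ℝ) (y : ℝ) => Real.exp (-(R * y)) * (C * min 1 y))
    (f := fun _ => (0:ℝ)) (bound := fun y => C * min 1 y)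
    ?_ ?_ ?_ ?_
  · simpa using key
  · refine Filter.Eventually.of_forall fun R => Continuous.aestronglyMeasurable ?_
    exact (Real.continuous_exp.comp ((continuous_const.mul continuous_id).neg)).mul
      (continuous_const.mul (continuous_const.min continuous_id))
  · filter_upwards [eventually_ge_atTop (0:ℝ)] with R hR
    filter_upwards [φ.ae_pos] with y hy
    have he : Real.exp (-(R * y)) ≤ 1 := Real.exp_le_one_iff.mpr (by nlinarith)
    have hmn : (0:ℝ) ≤ min 1 y := le_min zero_le_one hy.le
    rw [Real.norm_eq_abs, _root_.abs_of_nonneg (by positivity)]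
    exact mul_le_of_le_one_left (by positivity) he
  · exact φ.hint.const_mul C
  · filter_upwards [φ.ae_pos] with y hy
    have h1 : Tendsto (fun R : ℝ => -(R * y)) atTop atBot := by
      apply Filter.tendsto_neg_atTop_atBot.comp
      exact Filter.Tendsto.atTop_mul_const hy tendsto_id
    have h2 : Tendsto (fun R : ℝ => Real.exp (-(R * y))) atTop (nhds 0) :=
      Real.tendsto_exp_atBot.comp h1
    simpa using h2.mul_const (C * min 1 y)

lemma contOn_h (φ : BernsteinFn) {q a : ℝ} (hq : 0 ≤ q) (ha : 0 < a)
    {g : ℝ → ℂ} {s : Set ℝ} (hg : ContinuousOn g s) (hre : ∀ t ∈ s, a ≤ (g t).re) :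
    ContinuousOn (fun t => ((q:ℂ) + φ.toFunC (g t))⁻¹) s := by
  intro t ht
  have h1 : ContinuousAt (fun z : ℂ => ((q:ℂ) + φ.toFunC z)⁻¹) (g t) := by
    apply ContinuousAt.inv₀
    · exact continuousAt_const.add (φ.continuousAt_toFunC (ha.trans_le (hre t ht)))
    · exact φ.psi_ne_zero hq ha (hre t ht)
  exact h1.comp_continuousWithinAt (hg t ht)

end BernsteinFn

noncomputable def BernsteinFn.lineIm (φ : BernsteinFn) (q b R : ℝ) : ℝ :=
  ∫ u in (0:ℝ)..b, (((q:ℂ) + φ.toFunC ((R:ℂ) + (u:ℂ) * Complex.I))⁻¹).im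

namespace BernsteinFn

lemma lineIm_mono (φ : BernsteinFn) {q a : ℝ} (hq : 0 ≤ q) (ha : 0 < a) (b : ℝ)
    {R : ℝ} (haR : a ≤ R) : φ.lineIm q b a ≤ φ.lineIm q b R := by
  set h : ℂ → ℂ := fun z => ((q:ℂ) + φ.toFunC z)⁻¹ with hh
  -- the four sides
  have hIm : ∀ z : ℂ, ((a:ℂ)).re ≤ z.re ∧ z.re ≤ ((R:ℂ) + (b:ℂ)*Complex.I).re →
      True := fun _ _ => trivial
  have hrect := Complex.integral_boundary_rect_eq_zero_of_differentiableOn h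
    ((a:ℂ)) ((R:ℂ) + (b:ℂ)*Complex.I) ?hd
  case hd =>
    intro z hz
    rw [Complex.mem_reProdIm] at hz
    have hz1 : z.re ∈ Set.uIcc a R := by
      have : ((a:ℂ)).re = a := by simp
      have h2 : ((R:ℂ) + (b:ℂ)*Complex.I).re = R := by simp
      rw [this, h2] at hz; exact hz.1
    have hzre : a ≤ z.re := by
      rw [Set.uIcc_of_le haR] at hz1; exact hz1.1
    have hd1 : DifferentiableAt ℂ h z := by
      apply DifferentiableAt.inv
      · exact (differentiableAt_const _).add (φ.differentiableAt_toFunC (ha.trans_le hzre))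
      · exact φ.psi_ne_zero hq ha hzre
    exact hd1.differentiableWithinAt
  simp only [Complex.ofReal_re, Complex.ofReal_im, Complex.add_re, Complex.add_im,
    Complex.mul_re, Complex.mul_im, Complex.I_re, Complex.I_im, mul_zero, mul_one,
    zero_mul, sub_zero, zero_add, add_zero, Complex.ofReal_zero] at hrect
  -- name the four integrals
  set A : ℂ := ∫ x in a..R, h x with hA
  set B : ℂ := ∫ x in a..R, h ((x:ℂ) + (b:ℂ) * Complex.I) with hB
  set TR : ℂ := ∫ y in (0:ℝ)..b, h ((R:ℂ) + (y:ℂ) * Complex.I) with hTR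
  set TA : ℂ := ∫ y in (0:ℝ)..b, h ((a:ℂ) + (y:ℂ) * Complex.I) with hTA
  have hre := congrArg Complex.re hrect
  simp only [Complex.sub_re, Complex.add_re, smul_eq_mul, Complex.mul_re, Complex.I_re,
    Complex.I_im, Complex.zero_re, zero_mul, one_mul, zero_sub] at hre
  -- hre : A.re - B.re + (-TR.im) - (-TA.im) = 0  (roughly)
  -- interval integrabilities
  have hcl : ∀ {g : ℝ → ℂ} {s t : ℝ}, ContinuousOn g (Set.uIcc s t) →
      (∀ x ∈ Set.uIcc s t, a ≤ (g x).re) →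
      IntervalIntegrable (fun x => h (g x)) MeasureTheory.volume s t := by
    intro g s t hg hre'
    exact (φ.contOn_h hq ha hg hre').intervalIntegrable
  have hints : IntervalIntegrable (fun x : ℝ => h x) MeasureTheory.volume a R := by
    apply hcl Complex.continuous_ofReal.continuousOn
    intro x hx; rw [Set.uIcc_of_le haR] at hx; simpa using hx.1
  have hintB : IntervalIntegrable (fun x : ℝ => h ((x:ℂ) + (b:ℂ) * Complex.I))
      MeasureTheory.volume a R := by
    apply hcl (by fun_prop)
    intro x hx; rw [Set.uIcc_of_le haR] at hx; simpa using hx.1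
  have hintTR : IntervalIntegrable (fun y : ℝ => h ((R:ℂ) + (y:ℂ) * Complex.I))
      MeasureTheory.volume 0 b := by
    apply hcl (by fun_prop)
    intro y _; simpa using haR
  have hintTA : IntervalIntegrable (fun y : ℝ => h ((a:ℂ) + (y:ℂ) * Complex.I))
      MeasureTheory.volume 0 b := by
    apply hcl (by fun_prop)
    intro y _; simp
  -- lineIm equals the imaginary parts
  have hTAim : φ.lineIm q b a = TA.im := by
    have := ContinuousLinearMap.intervalIntegral_comp_comm Complex.imCLM hintTA
    simpa [BernsteinFn.lineIm, hh] using this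
  have hTRim : φ.lineIm q b R = TR.im := by
    have := ContinuousLinearMap.intervalIntegral_comp_comm Complex.imCLM hintTR
    simpa [BernsteinFn.lineIm, hh] using this
  -- A.re - B.re ≥ 0
  have hAre : (∫ x in a..R, (h (x:ℂ)).re) = A.re := by
    have := ContinuousLinearMap.intervalIntegral_comp_comm Complex.reCLM hints
    simpa using this
  have hBre : (∫ x in a..R, (h ((x:ℂ) + (b:ℂ) * Complex.I)).re) = B.re := by
    have := ContinuousLinearMap.intervalIntegral_comp_comm Complex.reCLM hintB
    simpa using this
  have hintsre : IntervalIntegrable (fun x : ℝ => (h (x:ℂ)).re)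
      MeasureTheory.volume a R := by
    have : ContinuousOn (fun x : ℝ => (h (x:ℂ)).re) (Set.uIcc a R) := by
      apply Complex.continuous_re.comp_continuousOn
      apply φ.contOn_h hq ha Complex.continuous_ofReal.continuousOn
      intro x hx; rw [Set.uIcc_of_le haR] at hx; simpa using hx.1
    exact this.intervalIntegrable
  have hintBre : IntervalIntegrable (fun x : ℝ => (h ((x:ℂ) + (b:ℂ) * Complex.I)).re)
      MeasureTheory.volume a R := by
    have : ContinuousOn (fun x : ℝ => (h ((x:ℂ) + (b:ℂ) * Complex.I)).re)
        (Set.uIcc a R) := by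
      apply Complex.continuous_re.comp_continuousOn
      apply φ.contOn_h hq ha (by fun_prop)
      intro x hx; rw [Set.uIcc_of_le haR] at hx; simpa using hx.1
    exact this.intervalIntegrable
  have hsub : A.re - B.re
      = ∫ x in a..R, ((h (x:ℂ)).re - (h ((x:ℂ) + (b:ℂ) * Complex.I)).re) := by
    rw [intervalIntegral.integral_sub hintsre hintBre, hAre, hBre]
  have hpos : 0 ≤ A.re - B.re := by
    rw [hsub]
    apply intervalIntegral.integral_nonneg haR
    intro x hx
    exact sub_nonneg.mpr (φ.re_h_mono hq ha hx.1 b)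
  rw [hTAim, hTRim]
  linarith

end BernsteinFn

namespace BernsteinFn

lemma lineIm_tendsto (φ : BernsteinFn) {q a : ℝ} (hq : 0 ≤ q) (ha : 0 < a) (b : ℝ) :
    Tendsto (φ.lineIm q b) atTop (nhds 0) := by
  set c := φ.toFun a with hc
  have hcpos : 0 < c := φ.toFun_pos ha
  set eps : ℝ → ℝ := fun R => ∫ y, Real.exp (-(R * y)) * ((1 + |b|) * min 1 y) ∂φ.μ
    with heps
  have hepsnn : ∀ R, 0 ≤ eps R := fun R => φ.eps_nonneg (by positivity)
  set M : ℝ → ℝ := fun R => (φ.δ * |b| + eps R) / (c + φ.δ * (R - a))^2 with hM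
  have hbound : ∀ R : ℝ, a ≤ R → |φ.lineIm q b R| ≤ M R * |b - 0| := by
    intro R haR
    have key : ∀ u ∈ Set.uIoc (0:ℝ) b,
        ‖(((q:ℂ) + φ.toFunC ((R:ℂ) + (u:ℂ) * Complex.I))⁻¹).im‖ ≤ M R := by
      intro u hu
      have hu' : |u| ≤ |b| := by
        rcases hu with ⟨h1, h2⟩
        rw [abs_le]
        constructor
        · calc -|b| ≤ min 0 b := le_min (neg_nonpos.mpr (abs_nonneg b)) (neg_abs_le b)
            _ ≤ u := h1.le
        · exact h2.trans (max_le (abs_nonneg b) (le_abs_self b))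
      set ζ : ℂ := (q:ℂ) + φ.toFunC ((R:ℂ) + (u:ℂ) * Complex.I) with hζ
      have hzre : ((R:ℂ) + (u:ℂ) * Complex.I).re = R := by simp
      have hzim : ((R:ℂ) + (u:ℂ) * Complex.I).im = u := by simp
      have hre : c + φ.δ * (R - a) ≤ ζ.re := by
        have := φ.psi_re_ge hq ha (z := (R:ℂ) + (u:ℂ) * Complex.I) (by rw [hzre]; exact haR)
        rw [hzre] at this; exact this
      have hrepos : 0 < c + φ.δ * (R - a) := by nlinarith [φ.hδ]
      have hnum : |ζ.im| ≤ φ.δ * |b| + eps R := by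
        have h1 : ζ.im = (φ.toFunC ((R:ℂ) + (u:ℂ) * Complex.I)).im := by
          rw [hζ]; simp
        have h2 := φ.im_toFunC_bound (z := (R:ℂ) + (u:ℂ) * Complex.I)
          (by rw [hzre]; exact (ha.trans_le haR).le) (B := |b|) (by rw [hzim]; exact hu')
        rw [hzre] at h2
        rw [h1]; exact h2
      have hden : (c + φ.δ * (R - a))^2 ≤ Complex.normSq ζ := by
        rw [Complex.normSq_apply]
        nlinarith [sq_nonneg ζ.im]
      have him : (ζ⁻¹).im = -ζ.im / Complex.normSq ζ := Complex.inv_im ζ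
      rw [Real.norm_eq_abs, him, abs_div, abs_neg]
      have hnsq : |Complex.normSq ζ| = Complex.normSq ζ :=
        _root_.abs_of_nonneg (Complex.normSq_nonneg ζ)
      rw [hnsq, hM]
      exact div_le_div₀ (by nlinarith [φ.hδ, hepsnn R, abs_nonneg b]) hnum (pow_pos hrepos 2) hden
    have := intervalIntegral.norm_integral_le_of_norm_le_const key
    simpa [BernsteinFn.lineIm, Real.norm_eq_abs] using this
  have htendM : Tendsto (fun R => M R * |b - 0|) atTop (nhds 0) := by
    have hepslim : Tendsto eps atTop (nhds 0) := φ.tendsto_eps (by positivity)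
    rcases φ.hδ.eq_or_lt with hδ0 | hδpos
    · have hMeq : M = fun R => eps R / c^2 := by
        funext R; rw [hM]; simp [← hδ0]
      rw [hMeq]
      have := (hepslim.div_const (c^2)).mul_const |b - 0|
      simpa using this
    · have hd1 : Tendsto (fun R : ℝ => c + φ.δ * (R - a)) atTop atTop := by
        apply tendsto_atTop_add_const_left
        apply Tendsto.const_mul_atTop hδpos
        simpa [sub_eq_add_neg] using tendsto_atTop_add_const_right atTop (-a) tendsto_id
      have hd2 : Tendsto (fun R : ℝ => (c + φ.δ * (R - a))^2) atTop atTop :=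
        (tendsto_pow_atTop (two_ne_zero)).comp hd1
      have hnumlim : Tendsto (fun R => φ.δ * |b| + eps R) atTop (nhds (φ.δ * |b| + 0)) :=
        tendsto_const_nhds.add hepslim
      have := (hnumlim.div_atTop hd2).mul_const |b - 0|
      simpa using this
  apply squeeze_zero_norm' _ htendM
  filter_upwards [eventually_ge_atTop a] with R hR
  exact hbound R hR

lemma crux (φ : BernsteinFn) {q a : ℝ} (hq : 0 ≤ q) (ha : 0 < a) (b : ℝ) :
    (∫ u in (0:ℝ)..b,
      (((q:ℂ) + φ.toFunC ((a:ℂ) + (u:ℂ) * Complex.I))⁻¹).im) ≤ 0 := by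
  have hkey : ∀ᶠ R in atTop, φ.lineIm q b a ≤ φ.lineIm q b R := by
    filter_upwards [eventually_ge_atTop a] with R hR
    exact φ.lineIm_mono hq ha b hR
  have := ge_of_tendsto (φ.lineIm_tendsto hq ha b) hkey
  simpa [BernsteinFn.lineIm] using this

end BernsteinFn

namespace BernsteinFn

lemma arg_eq_arctan' {z : ℂ} (hz : 0 < z.re) :
    Complex.arg z = Real.arctan (z.im / z.re) := by
  have h1 : |Complex.arg z| < Real.pi/2 :=
    Complex.abs_arg_lt_pi_div_two_iff.mpr (Or.inl hz)
  have h2 := abs_lt.mp h1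
  have := Real.arctan_tan (x := Complex.arg z) (by linarith [h2.1]) h2.2
  rw [← this, Complex.tan_arg]

lemma abs_im_inv_le {c : ℝ} (hc : 0 < c) {ζ : ℂ} (h : c/2 ≤ ζ.re) :
    |(ζ⁻¹).im| ≤ 1/c := by
  have hre : 0 < ζ.re := lt_of_lt_of_le (by positivity) h
  have hns : 0 < Complex.normSq ζ := by
    rw [Complex.normSq_apply]; nlinarith [sq_nonneg ζ.im]
  rw [Complex.inv_im, abs_div, abs_neg,
    _root_.abs_of_nonneg (Complex.normSq_nonneg ζ), div_le_div_iff₀ hns hc]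
  rw [Complex.normSq_apply]
  nlinarith [sq_nonneg (|ζ.im| - c/2), sq_abs ζ.im, abs_nonneg ζ.im]

lemma continuous_w (φ : BernsteinFn) {a : ℝ} (ha : 0 < a) :
    Continuous fun u : ℝ => φ.toFunC ((a:ℂ) + (u:ℂ) * Complex.I) := by
  rw [continuous_iff_continuousAt]
  intro u
  have h1 : ContinuousAt φ.toFunC ((a:ℂ) + (u:ℂ) * Complex.I) := by
    apply φ.continuousAt_toFunC
    simpa using ha
  have h2 : Continuous fun u : ℝ => (a:ℂ) + (u:ℂ) * Complex.I := by fun_prop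
  have h3 : ContinuousAt (φ.toFunC ∘ fun u : ℝ => (a:ℂ) + (u:ℂ) * Complex.I) u :=
    ContinuousAt.comp (x := u) h1 h2.continuousAt
  exact h3

lemma hasDerivAt_G (φ : BernsteinFn) {a : ℝ} (ha : 0 < a) (b : ℝ) {q₀ : ℝ}
    (hq₀ : 0 ≤ q₀) :
    HasDerivAt
      (fun q : ℝ => ∫ u in (0:ℝ)..b,
        Complex.arg ((q : ℂ) + φ.toFunC ((a:ℂ) + (u:ℂ) * Complex.I)))
      (∫ u in (0:ℝ)..b,
        (((q₀:ℂ) + φ.toFunC ((a:ℂ) + (u:ℂ) * Complex.I))⁻¹).im) q₀ := by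
  have hcpos : 0 < φ.toFun a := φ.toFun_pos ha
  set c := φ.toFun a with hc
  have hwre : ∀ u : ℝ, c ≤ (φ.toFunC ((a:ℂ) + (u:ℂ) * Complex.I)).re := by
    intro u
    have hzre : ((a:ℂ) + (u:ℂ) * Complex.I).re = a := by simp
    have := φ.re_toFunC_ge (z := (a:ℂ) + (u:ℂ) * Complex.I) (by rw [hzre]; exact ha.le)
    rw [hzre] at this; exact this
  have hεpos : (0:ℝ) < (q₀ + c)/2 := by positivity
  have hball : ∀ q ∈ Metric.ball q₀ ((q₀ + c)/2), ∀ u : ℝ,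
      c/2 ≤ ((q:ℂ) + φ.toFunC ((a:ℂ) + (u:ℂ) * Complex.I)).re := by
    intro q hqb u
    have h1 : |q - q₀| < (q₀ + c)/2 := by
      simpa [Real.dist_eq] using hqb
    have h2 := abs_lt.mp h1
    have h3 := hwre u
    simp only [Complex.add_re, Complex.ofReal_re]
    linarith [h2.1]
  have hcontarg : ∀ q : ℝ, (∀ u : ℝ,
        0 < ((q:ℂ) + φ.toFunC ((a:ℂ) + (u:ℂ) * Complex.I)).re) →
      Continuous fun u : ℝ =>
        Complex.arg ((q:ℂ) + φ.toFunC ((a:ℂ) + (u:ℂ) * Complex.I)) := by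
    intro q hqre
    rw [continuous_iff_continuousAt]
    intro u
    have h1 : ContinuousAt Complex.arg
        ((q:ℂ) + φ.toFunC ((a:ℂ) + (u:ℂ) * Complex.I)) :=
      Complex.continuousAt_arg (Complex.mem_slitPlane_iff.mpr (Or.inl (hqre u)))
    have h3 : ContinuousAt (Complex.arg ∘ fun u : ℝ =>
        (q:ℂ) + φ.toFunC ((a:ℂ) + (u:ℂ) * Complex.I)) u :=
      ContinuousAt.comp (x := u) h1 ((continuous_const.add (φ.continuous_w ha)).continuousAt)
    exact h3
  have main := intervalIntegral.hasDerivAt_integral_of_dominated_loc_of_deriv_le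
    (𝕜 := ℝ) (μ := MeasureTheory.volume) (a := (0:ℝ)) (b := b)
    (F := fun (q : ℝ) (u : ℝ) =>
      Complex.arg ((q:ℂ) + φ.toFunC ((a:ℂ) + (u:ℂ) * Complex.I)))
    (F' := fun (q : ℝ) (u : ℝ) =>
      (((q:ℂ) + φ.toFunC ((a:ℂ) + (u:ℂ) * Complex.I))⁻¹).im)
    (x₀ := q₀) (bound := fun _ => 1/c) (s := Metric.ball q₀ ((q₀ + c)/2)) (Metric.ball_mem_nhds q₀ hεpos) ?_ ?_ ?_ ?_ ?_ ?_
  · exact main.2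
  · -- measurability of F q near q₀
    filter_upwards [Metric.ball_mem_nhds q₀ hεpos] with q hqb
    apply Continuous.aestronglyMeasurable
    apply hcontarg
    intro u
    have := hball q hqb u
    linarith
  · -- integrability of F q₀
    apply Continuous.intervalIntegrable
    apply hcontarg
    intro u
    have := hwre u
    simp only [Complex.add_re, Complex.ofReal_re]
    linarith
  · -- measurability of F' q₀
    apply Continuous.aestronglyMeasurable
    apply Complex.continuous_im.comp
    apply Continuous.inv₀
    · exact continuous_const.add (φ.continuous_w ha)
    · intro u
      intro h0
      have := hwre u
      have h1 : ((q₀:ℂ) + φ.toFunC ((a:ℂ) + (u:ℂ) * Complex.I)).re = 0 := by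
        rw [h0]; simp
      simp only [Complex.add_re, Complex.ofReal_re] at h1
      linarith
  · -- bound
    apply Filter.Eventually.of_forall
    intro u _ q hqb
    rw [Real.norm_eq_abs]
    exact abs_im_inv_le hcpos (hball q hqb u)
  · exact intervalIntegrable_const
  · -- derivative
    apply Filter.Eventually.of_forall
    intro u _ q hqb
    set X := (φ.toFunC ((a:ℂ) + (u:ℂ) * Complex.I)).re with hX
    set Y := (φ.toFunC ((a:ℂ) + (u:ℂ) * Complex.I)).im with hY
    have hqX : 0 < q + X := by
      have := hball q hqb u
      simp only [Complex.add_re, Complex.ofReal_re, ← hX] at this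
      linarith
    have hev : (fun p : ℝ =>
          Complex.arg ((p:ℂ) + φ.toFunC ((a:ℂ) + (u:ℂ) * Complex.I)))
        =ᶠ[nhds q] fun p => Real.arctan (Y / (p + X)) := by
      have hnb : Set.Ioi (-X) ∈ nhds q := Ioi_mem_nhds (by linarith)
      filter_upwards [hnb] with p hp
      have hpre : 0 < ((p:ℂ) + φ.toFunC ((a:ℂ) + (u:ℂ) * Complex.I)).re := by
        simp only [Complex.add_re, Complex.ofReal_re, ← hX]
        simp only [Set.mem_Ioi] at hp
        linarith
      rw [arg_eq_arctan' hpre]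
      congr 1
      simp [← hX, ← hY]
    have hg : HasDerivAt (fun p : ℝ => Y / (p + X)) (-Y / (q + X)^2) q := by
      have h1 : HasDerivAt (fun p : ℝ => p + X) 1 q := (hasDerivAt_id q).add_const X
      have h2 := h1.inv hqX.ne'
      have h3 := h2.const_mul Y
      have h4 : (fun p : ℝ => Y * (p + X)⁻¹) = fun p : ℝ => Y / (p + X) := by
        funext p; rw [div_eq_mul_inv]
      simp only [Pi.inv_apply, ← div_eq_mul_inv] at h3
      exact h3.congr_deriv (by ring)
    have harc := (Real.hasDerivAt_arctan (Y / (q + X))).comp q hg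
    have hval : (1 / (1 + (Y / (q + X))^2)) * (-Y / (q + X)^2)
        = (((q:ℂ) + φ.toFunC ((a:ℂ) + (u:ℂ) * Complex.I))⁻¹).im := by
      rw [Complex.inv_im]
      have h5 : ((q:ℂ) + φ.toFunC ((a:ℂ) + (u:ℂ) * Complex.I)).im = Y := by simp [← hY]
      have h6 : ((q:ℂ) + φ.toFunC ((a:ℂ) + (u:ℂ) * Complex.I)).re = q + X := by
        simp [← hX]
      rw [Complex.normSq_apply, h5, h6]
      have h7 : ((q+X)*(q+X) + Y*Y) ≠ 0 := by nlinarith [sq_nonneg Y]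
      field_simp [hqX.ne', h7]
    have harc' : HasDerivAt (fun p : ℝ => Real.arctan (Y / (p + X)))
        (1 / (1 + (Y / (q + X))^2) * (-Y / (q + X)^2)) q := harc
    have hfinal := harc'.congr_of_eventuallyEq hev
    rw [hval] at hfinal
    exact hfinal

end BernsteinFn


/-- For `φ^{†q} = q + φ` and fixed `z = a + ib` with `a > 0`, the map
`q ↦ A_{φ^{†q}}(z) = ∫₀^b arg φ^{†q}(a+iu) du` is non-increasing on `[0,∞)`. -/
theorem stmt12 (φ : BernsteinFn) (a b : ℝ) (ha : 0 < a) :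
    AntitoneOn
      (fun q : ℝ =>
        ∫ u in (0 : ℝ)..b, Complex.arg ((q : ℂ) + φ.toFunC ((a : ℂ) + (u : ℂ) * Complex.I)))
      (Set.Ici 0) := by
  apply antitoneOn_of_deriv_nonpos (convex_Ici 0)
  · intro q hq
    exact ((φ.hasDerivAt_G ha b hq).continuousAt).continuousWithinAt
  · rw [interior_Ici]
    intro q hq
    exact ((φ.hasDerivAt_G ha b hq.le).differentiableAt).differentiableWithinAt
  · rw [interior_Ici]
    intro q hq
    rw [(φ.hasDerivAt_G ha b hq.le).deriv]
    exact φ.crux hq.le ha b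
end

section
/- Let φ be a Bernstein function such that there exists a nonzero z₀ with Re(z₀) ≥ 0 and φ(z₀) = 0. Then φ(0) = 0, the drift δ = 0, z₀ is purely imaginary, and the Lévy measure μ is a discrete measure of the form μ = Σ_n c_n δ_{h k_n} with Σ_n c_n < ∞, for some h > 0 and positive integers k_n and c_n ≥ 0; moreover φ is periodic on the right half-plane with period 2πi/h. -/
open MeasureTheory Filter Set

lemma aux_bound (z : ℂ) (hz : 0 ≤ z.re) {y : ℝ} (hy : 0 < y) :
    ‖1 - Complex.exp (-(z * y))‖ ≤ max 2 (2 * ‖z‖) * min 1 y := by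
  have habs : ‖Complex.exp (-(z * y))‖ ≤ 1 := by
    rw [Complex.norm_exp]
    apply Real.exp_le_one_iff.mpr
    simp only [Complex.neg_re, Complex.mul_re, Complex.ofReal_re, Complex.ofReal_im]
    nlinarith
  have key : ‖1 - Complex.exp (-(z * y))‖ ≤ min 2 (2 * (‖z‖ * y)) := by
    rcases le_or_gt (‖z‖ * y) 1 with hle | hlt
    · have h1 : ‖-(z * y)‖ ≤ 1 := by
        simpa [abs_of_pos hy] using hle
      have := Complex.norm_exp_sub_one_le h1
      have h2 : ‖-(z*y)‖ = ‖z‖ * y := by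
        rw [norm_neg, norm_mul]
        simp [abs_of_pos hy]
      rw [h2] at this
      have : ‖1 - Complex.exp (-(z * y))‖ ≤ 2 * (‖z‖ * y) := by
        rw [← norm_neg]; simpa [neg_sub] using this
      refine le_min ?_ this
      calc ‖1 - Complex.exp (-(z * y))‖ ≤ ‖(1:ℂ)‖ + ‖Complex.exp (-(z * y))‖ :=
            norm_sub_le _ _
        _ ≤ 1 + 1 := by simpa using habs
        _ = 2 := by norm_num
    · refine le_min ?_ ?_
      · calc ‖1 - Complex.exp (-(z * y))‖ ≤ ‖(1:ℂ)‖ + ‖Complex.exp (-(z * y))‖ :=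
            norm_sub_le _ _
          _ ≤ 1 + 1 := by simpa using habs
          _ = 2 := by norm_num
      · calc ‖1 - Complex.exp (-(z * y))‖ ≤ 2 := by
              calc ‖1 - Complex.exp (-(z * y))‖ ≤ ‖(1:ℂ)‖ + ‖Complex.exp (-(z * y))‖ :=
                  norm_sub_le _ _
                _ ≤ 1 + 1 := by simpa using habs
                _ = 2 := by norm_num
          _ ≤ 2 * (‖z‖ * y) := by nlinarith
  refine key.trans ?_
  rcases le_or_gt y 1 with h1 | h1
  · rw [min_eq_right h1]
    calc min 2 (2 * (‖z‖ * y)) ≤ 2 * (‖z‖ * y) := min_le_right _ _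
      _ = (2 * ‖z‖) * y := by ring
      _ ≤ max 2 (2 * ‖z‖) * y := by
          have := le_max_right 2 (2*‖z‖); nlinarith
  · rw [min_eq_left h1.le]
    calc min 2 (2 * (‖z‖ * y)) ≤ 2 := min_le_left _ _
      _ ≤ max 2 (2*‖z‖) * 1 := by simpa using le_max_left 2 (2*‖z‖)

lemma aux_aepos (φ : BernsteinFn) : ∀ᵐ y ∂φ.μ, 0 < y := by
  have : {y : ℝ | ¬ 0 < y} = Set.Iic 0 := by ext y; simp [not_lt]
  rw [ae_iff, this]; exact φ.hsupp

lemma aux_integrable_s16 (φ : BernsteinFn) (z : ℂ) (hz : 0 ≤ z.re) :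
    Integrable (fun y : ℝ => 1 - Complex.exp (-(z * (y : ℂ)))) φ.μ := by
  have hmeas : AEStronglyMeasurable (fun y : ℝ => 1 - Complex.exp (-(z * (y : ℂ)))) φ.μ := by
    apply Continuous.aestronglyMeasurable
    continuity
  refine Integrable.mono' (φ.hint.const_mul (max 2 (2 * ‖z‖))) hmeas ?_
  · filter_upwards [aux_aepos φ] with y hy
    exact aux_bound z hz hy

/-- If a Bernstein function vanishes at some nonzero `z₀` with `Re z₀ ≥ 0`, then `φ(0) = 0`,
the drift is `0`, `z₀` is purely imaginary, the Lévy measure is `Σ_n c_n δ_{h k_n}` with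
`Σ c_n < ∞`, `h > 0`, `k_n ∈ ℕ₊`, `c_n ≥ 0`, and `φ` is `2πi/h`-periodic on the right
half-plane. -/
theorem stmt16 (φ : BernsteinFn) (z₀ : ℂ) (hz₀ : z₀ ≠ 0) (hre : 0 ≤ z₀.re)
    (hzero : φ.toFunC z₀ = 0) :
    φ.κ = 0 ∧ φ.δ = 0 ∧ z₀.re = 0 ∧
      ∃ h : ℝ, 0 < h ∧ ∃ (c : ℕ → ℝ) (k : ℕ → ℕ),
        (∀ n, 0 ≤ c n) ∧ (∀ n, 1 ≤ k n) ∧ Summable c ∧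
        φ.μ = Measure.sum
          (fun n => ENNReal.ofReal (c n) • Measure.dirac (h * (k n : ℝ))) ∧
        ∀ z : ℂ, 0 < z.re →
          φ.toFunC (z + ((2 * Real.pi / h : ℝ) : ℂ) * Complex.I) = φ.toFunC z := by
  set a := z₀.re with ha_def
  set b := z₀.im with hb_def
  have hInt := aux_integrable_s16 φ z₀ hre
  have haepos := aux_aepos φ
  -- real part computation
  have hre_pt : ∀ y : ℝ, (1 - Complex.exp (-(z₀ * (y:ℂ)))).re
      = 1 - Real.exp (-(a * y)) * Real.cos (b * y) := by
    intro y
    simp [Complex.sub_re, Complex.exp_re, Complex.neg_re, Complex.neg_im,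
      Complex.mul_re, Complex.mul_im, Real.cos_neg]
    rfl
  have him_pt : ∀ y : ℝ, (1 - Complex.exp (-(z₀ * (y:ℂ)))).im
      = Real.exp (-(a * y)) * Real.sin (b * y) := by
    intro y
    simp [Complex.sub_im, Complex.exp_im, Complex.neg_re, Complex.neg_im,
      Complex.mul_re, Complex.mul_im, Real.sin_neg]
    rfl
  have hre0 : φ.κ + φ.δ * a
      + ∫ y, (1 - Real.exp (-(a * y)) * Real.cos (b * y)) ∂φ.μ = 0 := by
    have h1 : (φ.toFunC z₀).re = 0 := by rw [hzero]; simp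
    have h2 : (∫ y, (1 - Complex.exp (-(z₀ * (y:ℂ)))) ∂φ.μ).re
        = ∫ y, (1 - Real.exp (-(a * y)) * Real.cos (b * y)) ∂φ.μ := by
      rw [← RCLike.re_to_complex, ← integral_re hInt]
      exact integral_congr_ae (Eventually.of_forall fun y => by
        simpa using (hre_pt y))
    simpa [BernsteinFn.toFunC, Complex.add_re, Complex.mul_re, h2] using h1
  have hgint : Integrable (fun y => 1 - Real.exp (-(a * y)) * Real.cos (b * y)) φ.μ := by
    have := hInt.re
    refine this.congr (Eventually.of_forall fun y => ?_)
    simpa using (hre_pt y)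
  have hgnn : ∀ᵐ y ∂φ.μ, 0 ≤ 1 - Real.exp (-(a * y)) * Real.cos (b * y) := by
    filter_upwards [haepos] with y hy
    have h1 : Real.exp (-(a * y)) ≤ 1 := Real.exp_le_one_iff.mpr (by nlinarith)
    have h2 : Real.cos (b * y) ≤ 1 := Real.cos_le_one _
    nlinarith [Real.exp_pos (-(a * y))]
  have hκ0 : φ.κ = 0 ∧ φ.δ * a = 0 ∧
      ∫ y, (1 - Real.exp (-(a * y)) * Real.cos (b * y)) ∂φ.μ = 0 := by
    have hi : 0 ≤ ∫ y, (1 - Real.exp (-(a * y)) * Real.cos (b * y)) ∂φ.μ :=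
      integral_nonneg_of_ae hgnn
    have hδa : 0 ≤ φ.δ * a := mul_nonneg φ.hδ hre
    refine ⟨by linarith [φ.hκ], by linarith [φ.hκ], by linarith [φ.hκ]⟩
  have haeg : ∀ᵐ y ∂φ.μ, Real.exp (-(a * y)) * Real.cos (b * y) = 1 := by
    have := (integral_eq_zero_iff_of_nonneg_ae hgnn hgint).mp hκ0.2.2
    filter_upwards [this] with y hy
    have : 1 - Real.exp (-(a * y)) * Real.cos (b * y) = 0 := hy
    linarith
  -- the measure is nonzero
  have hμne : φ.μ ≠ 0 := by
    intro h0
    apply φ.nontriv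
    have hz : ((φ.κ : ℂ) + (φ.δ : ℂ) * z₀) = 0 := by
      have := hzero
      simp [BernsteinFn.toFunC, h0] at this
      exact_mod_cast this
    have hδ0 : φ.δ = 0 := by
      by_contra hδne
      have : z₀ = -(φ.κ / φ.δ : ℝ) := by
        have hδc : (φ.δ : ℂ) ≠ 0 := by exact_mod_cast hδne
        push_cast
        rw [eq_neg_iff_add_eq_zero, add_div' _ _ _ hδc, div_eq_zero_iff]
        left
        linear_combination hz
      have hval : a = -(φ.κ / φ.δ) := by rw [ha_def, this]; simp
      have hκδ : 0 ≤ φ.κ / φ.δ := div_nonneg φ.hκ φ.hδ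
      have ha0 : a = 0 := le_antisymm (by rw [hval]; linarith) hre
      have hκ00 : φ.κ = 0 := by
        have h1 : φ.κ / φ.δ = 0 := by rw [ha0] at hval; linarith
        field_simp [hδne] at h1; simpa using h1
      apply hz₀
      rw [hκ00] at hz
      simp at hz
      rcases hz with h | h
      · exact absurd h (by exact_mod_cast hδne)
      · exact h
    refine ⟨hκ0.1, hδ0, h0⟩
  -- Re z₀ = 0
  have ha0 : a = 0 := by
    rcases eq_or_lt_of_le hre with h | h
    · exact h.symm
    · exfalso
      apply hμne
      have hFalse : ∀ᵐ y ∂φ.μ, False := by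
        filter_upwards [haeg, haepos] with y h1 h2
        have he1 : Real.exp (-(a * y)) < 1 := Real.exp_lt_one_iff.mpr (by nlinarith)
        have hc1 : Real.cos (b * y) ≤ 1 := Real.cos_le_one _
        nlinarith [Real.exp_pos (-(a * y)),
          mul_nonneg (Real.exp_pos (-(a*y))).le (sub_nonneg.2 hc1)]
      have := ae_iff.mp hFalse
      simp at this
      exact this
  have hb_ne : b ≠ 0 := by
    intro hb0
    apply hz₀
    apply Complex.ext <;> simp [← ha_def, ← hb_def, ha0, hb0]
  have haecos : ∀ᵐ y ∂φ.μ, Real.cos (b * y) = 1 := by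
    filter_upwards [haeg] with y hy
    rw [ha0] at hy; simpa using hy
  -- δ = 0
  have hδ0 : φ.δ = 0 := by
    have him0 : (φ.toFunC z₀).im = 0 := by rw [hzero]; simp
    have hI : (∫ y, (1 - Complex.exp (-(z₀ * (y:ℂ)))) ∂φ.μ).im = 0 := by
      rw [← RCLike.im_to_complex, ← integral_im hInt]
      rw [show (0:ℝ) = ∫ (_ : ℝ), (0:ℝ) ∂φ.μ by simp]
      refine integral_congr_ae ?_
      filter_upwards [haecos] with y hy
      have hs : Real.sin (b * y) = 0 := by
        have := Real.sin_sq_add_cos_sq (b * y)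
        rw [hy] at this
        nlinarith
      simp [him_pt y, hs]
    have : φ.δ * b = 0 := by
      simpa [BernsteinFn.toFunC, Complex.add_im, Complex.mul_im, hI, ← hb_def] using him0
    rcases mul_eq_zero.mp this with h | h
    · exact h
    · exact absurd h hb_ne
  refine ⟨hκ0.1, hδ0, ha0, ?_⟩
  have hβ : 0 < |b| := abs_pos.mpr hb_ne
  set h : ℝ := 2 * Real.pi / |b| with hh_def
  have hh : 0 < h := div_pos (by positivity) hβ
  refine ⟨h, hh, ?_⟩
  -- a.e. lattice structure
  have haek : ∀ᵐ y ∂φ.μ, ∃ k : ℕ, 1 ≤ k ∧ y = h * k := by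
    filter_upwards [haecos, haepos] with y hc hy
    obtain ⟨n, hn⟩ := (Real.cos_eq_one_iff (b * y)).mp hc
    have habs : |b| * y = 2 * Real.pi * |(n:ℝ)| := by
      have h1 : |b * y| = |(n:ℝ) * (2 * Real.pi)| := by rw [hn]
      rw [abs_mul, abs_of_pos hy, abs_mul, abs_of_pos (by positivity : (0:ℝ) < 2 * Real.pi)]
        at h1
      linarith
    have hn0 : n ≠ 0 := by
      intro h0
      rw [h0] at habs
      simp at habs
      rcases habs with h' | h'
      · exact hb_ne h'
      · linarith
    refine ⟨n.natAbs, Nat.one_le_iff_ne_zero.mpr (Int.natAbs_ne_zero.mpr hn0), ?_⟩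
    have hcast : ((n.natAbs : ℕ) : ℝ) = |(n:ℝ)| := by
      simp [Nat.cast_natAbs, Int.cast_abs]
    rw [hcast, hh_def]
    field_simp
    linarith
  -- finiteness of the measure
  have hεpos : 0 < min 1 h := lt_min one_pos hh
  have hfin : φ.μ Set.univ < ⊤ := by
    refine lt_of_le_of_lt (measure_mono_ae ?_) (φ.hint.measure_ge_lt_top hεpos)
    filter_upwards [haek] with y hy _
    obtain ⟨k, hk1, rfl⟩ := hy
    have hk1' : (1:ℝ) ≤ k := by exact_mod_cast hk1
    have : h ≤ h * k := by nlinarith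
    exact min_le_min le_rfl this
  haveI : IsFiniteMeasure φ.μ := ⟨hfin⟩
  set g : ℕ → ℝ := fun n => h * ((n + 1 : ℕ) : ℝ) with hg_def
  have hginj : Function.Injective g := by
    intro m n hmn
    simp only [hg_def] at hmn
    have h1 : ((m+1:ℕ):ℝ) = ((n+1:ℕ):ℝ) := mul_left_cancel₀ hh.ne' hmn
    have h2 : m + 1 = n + 1 := by exact_mod_cast h1
    omega
  refine ⟨fun n => (φ.μ {g n}).toReal, fun n => n + 1, fun n => ENNReal.toReal_nonneg,
    fun n => Nat.le_add_left 1 n, ?_, ?_, ?_⟩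
  · -- summability
    have hd : Pairwise (Function.onFun Disjoint fun n => ({g n} : Set ℝ)) := by
      intro m n hmn
      simp only [Function.onFun, Set.disjoint_singleton]
      exact fun e => hmn (hginj e)
    refine ENNReal.summable_toReal ?_
    rw [← measure_iUnion hd (fun n => measurableSet_singleton _)]
    exact (lt_of_le_of_lt (measure_mono (Set.subset_univ _)) hfin).ne
  · -- measure identity
    refine Measure.ext fun A hA => ?_
    rw [Measure.sum_apply _ hA]
    have hS : MeasurableSet (⋃ n, ({g n} : Set ℝ)) :=
      MeasurableSet.iUnion fun n => measurableSet_singleton _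
    have hAS : φ.μ A = φ.μ (A ∩ ⋃ n, ({g n} : Set ℝ)) := by
      have h1 := measure_inter_add_diff A hS (μ := φ.μ)
      have h2 : φ.μ (A \ ⋃ n, ({g n} : Set ℝ)) = 0 := by
        refine measure_mono_null ?_ (ae_iff.mp haek)
        intro y hy
        simp only [Set.mem_diff, Set.mem_iUnion, Set.mem_singleton_iff] at hy
        simp only [Set.mem_setOf_eq]
        rintro ⟨k, hk1, rfl⟩
        exact hy.2 ⟨k - 1, by rw [hg_def]; congr 2; omega⟩
      rw [h2, add_zero] at h1
      exact h1.symm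
    have hd' : Pairwise (Function.onFun Disjoint fun n => A ∩ ({g n} : Set ℝ)) := by
      intro m n hmn
      simp only [Function.onFun]
      refine Set.disjoint_left.mpr ?_
      rintro y ⟨-, hy1⟩ ⟨-, hy2⟩
      simp only [Set.mem_singleton_iff] at hy1 hy2
      exact hmn (hginj (hy1 ▸ hy2))
    rw [hAS, Set.inter_iUnion,
      measure_iUnion hd' fun n => hA.inter (measurableSet_singleton _)]
    refine tsum_congr fun n => ?_
    rw [Measure.smul_apply, Measure.dirac_apply' _ hA,
      ENNReal.ofReal_toReal (measure_lt_top φ.μ _).ne, smul_eq_mul]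
    by_cases hm : g n ∈ A
    · rw [Set.inter_eq_self_of_subset_right (Set.singleton_subset_iff.mpr hm)]
      simp only [Set.indicator]
      rw [if_pos hm, Pi.one_apply, mul_one]
    · have he : A ∩ ({g n} : Set ℝ) = ∅ := by
        ext y
        simp only [Set.mem_inter_iff, Set.mem_singleton_iff, Set.mem_empty_iff_false,
          iff_false, not_and]
        rintro hyA rfl
        exact hm hyA
      rw [he]
      simp only [Set.indicator]
      rw [if_neg hm, mul_zero, measure_empty]
  · -- periodicity
    intro z hz
    have hhC : (h:ℂ) ≠ 0 := by exact_mod_cast hh.ne'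
    simp only [BernsteinFn.toFunC, hδ0]
    have : (∫ y, (1 - Complex.exp (-((z + ((2 * Real.pi / h : ℝ) : ℂ) * Complex.I)
        * (y : ℂ)))) ∂φ.μ) = ∫ y, (1 - Complex.exp (-(z * (y : ℂ)))) ∂φ.μ := by
      refine integral_congr_ae ?_
      filter_upwards [haek] with y hy
      obtain ⟨k, hk1, rfl⟩ := hy
      congr 1
      rw [show -((z + ((2 * Real.pi / h : ℝ) : ℂ) * Complex.I) * ((h * (k:ℕ) : ℝ) : ℂ))
          = -(z * ((h * (k:ℕ) : ℝ) : ℂ)) + ((-(k:ℕ) : ℤ) : ℂ) * (2 * Real.pi * Complex.I) by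
        push_cast
        field_simp
        ring]
      rw [Complex.exp_add, Complex.exp_int_mul_two_pi_mul_I, mul_one]
    rw [this]
    simp
end
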